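/- arXiv:2507.12199 — 8 statements merged into one kernel-verified Lean document; each statement's English description precedes it below -/
import Mathlib

section
/- Let (H, A) be a TMP instance with H connected (so that at least one solution exists). Then for every natural number t, MS(H, A, t) = t holds if and only if t = MS(H, A). -/
/-- A permutation of the nodes is a *swap layer* of `H` if it is an involution that moves
each node only to an adjacent node; such permutations are exactly the products of the
transpositions swapping the two endpoints of each edge of a matching of `H`. -/
def IsSwapLayer {V : Type*} (H : SimpleGraph V) (π : Equiv.Perm V) : Prop :=
  π * π = 1 ∧ ∀ v, π v = v ∨ H.Adj v (π v)

/-- A solution to the Token Meeting Problem instance `(H, A)`: an initial bijection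
from tokens to nodes together with a sequence of swap layers (matchings encoded as
involutive permutations), such that every connection of `A` is placed on an edge of `H`
at some intermediate time. The bijection after `t` layers is the composition of the
first `t` layer permutations (in order) with the initial bijection. -/
structure TMPSolution {V Q : Type*} (H : SimpleGraph V) (A : SimpleGraph Q) where
  init : Q ≃ V
  layers : List (Equiv.Perm V)
  isSwapLayer : ∀ π ∈ layers, IsSwapLayer H π
  meets : ∀ p q : Q, A.Adj p q → ∃ t ≤ layers.length,
    H.Adj (((layers.take t).reverse.prod) (init p)) (((layers.take t).reverse.prod) (init q))

namespace TMPSolution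

variable {V Q : Type*} {H : SimpleGraph V} {A : SimpleGraph Q}

/-- The bijection from tokens to nodes after the first `t` swap layers, i.e. `f_{t+1}`. -/
def bijAt (s : TMPSolution H A) (t : ℕ) : Q ≃ V :=
  s.init.trans ((s.layers.take t).reverse.prod : Equiv.Perm V)

/-- The number of steps of a solution. -/
def steps (s : TMPSolution H A) : ℕ := s.layers.length

/-- The number of swaps of a solution: each swap layer contributes the number of
transpositions it is composed of, i.e. half the size of its support. -/
noncomputable def swaps [Fintype V] [DecidableEq V] (s : TMPSolution H A) : ℕ :=
  (s.layers.map fun π => π.support.card / 2).sum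

end TMPSolution

/-- `MS H A`: the minimum number of swaps of any solution (`⊤` if none exists). -/
noncomputable def MS {V Q : Type*} [Fintype V] [DecidableEq V] (H : SimpleGraph V)
    (A : SimpleGraph Q) : ℕ∞ :=
  sInf {n : ℕ∞ | ∃ s : TMPSolution H A, n = (s.swaps : ℕ∞)}

/-- `MT H A`: the minimum number of steps of any solution (`⊤` if none exists). -/
noncomputable def MT {V Q : Type*} (H : SimpleGraph V) (A : SimpleGraph Q) : ℕ∞ :=
  sInf {n : ℕ∞ | ∃ s : TMPSolution H A, n = (s.steps : ℕ∞)}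

/-- `MSt H A t`: the minimum number of swaps of any solution with exactly `t` steps
(`⊤` if none exists). -/
noncomputable def MSt {V Q : Type*} [Fintype V] [DecidableEq V] (H : SimpleGraph V)
    (A : SimpleGraph Q) (t : ℕ) : ℕ∞ :=
  sInf {n : ℕ∞ | ∃ s : TMPSolution H A, s.steps = t ∧ n = (s.swaps : ℕ∞)}


section Aux

variable {V Q : Type*} {H : SimpleGraph V} {A : SimpleGraph Q}

lemma isSwapLayer_one : IsSwapLayer H (1 : Equiv.Perm V) :=
  ⟨one_mul 1, fun _ => Or.inl rfl⟩

lemma isSwapLayer_swap [DecidableEq V] {a b : V} (h : H.Adj a b) :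
    IsSwapLayer H (Equiv.swap a b) := by
  refine ⟨Equiv.swap_mul_self a b, fun v => ?_⟩
  rcases eq_or_ne v a with rfl | hva
  · right; rw [Equiv.swap_apply_left]; exact h
  rcases eq_or_ne v b with rfl | hvb
  · right; rw [Equiv.swap_apply_right]; exact h.symm
  · left; exact Equiv.swap_apply_of_ne_of_ne hva hvb

lemma prod_reverse_cons (σ : Equiv.Perm V) (L : List (Equiv.Perm V)) :
    (σ :: L).reverse.prod = L.reverse.prod * σ := by
  rw [List.reverse_cons, List.prod_append, List.prod_singleton]

/-- Moving a token along a path to become adjacent to a target. -/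
lemma walk_lemma [DecidableEq V] {a b : V} (w : H.Walk a b) :
    w.IsPath → a ≠ b →
    ∃ L : List (Equiv.Perm V), (∀ π ∈ L, IsSwapLayer H π) ∧
      L.reverse.prod b = b ∧ H.Adj (L.reverse.prod a) b := by
  induction w with
  | nil => intro _ hab; exact absurd rfl hab
  | @cons a c b h p ih =>
    intro hw hab
    rcases eq_or_ne c b with rfl | hcb
    · exact ⟨[], by simp, by simp, by simpa using h⟩
    · obtain ⟨L', hL', hfix, hadj⟩ := ih hw.of_cons hcb
      refine ⟨Equiv.swap a c :: L', ?_, ?_, ?_⟩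
      · intro π hπ
        rcases List.mem_cons.mp hπ with rfl | hπ
        · exact isSwapLayer_swap h
        · exact hL' π hπ
      · rw [prod_reverse_cons, Equiv.Perm.mul_apply,
          Equiv.swap_apply_of_ne_of_ne hab.symm (Ne.symm hcb)]
        exact hfix
      · rw [prod_reverse_cons, Equiv.Perm.mul_apply, Equiv.swap_apply_left]
        exact hadj

lemma meets_list [DecidableEq V] (hconn : H.Connected) (ps : List (Q × Q)) :
    ∀ f : Q ≃ V, ∃ L : List (Equiv.Perm V), (∀ π ∈ L, IsSwapLayer H π) ∧
      ∀ pq ∈ ps, A.Adj pq.1 pq.2 → ∃ t ≤ L.length,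
        H.Adj ((L.take t).reverse.prod (f pq.1)) ((L.take t).reverse.prod (f pq.2)) := by
  induction ps with
  | nil => intro f; exact ⟨[], by simp, by simp⟩
  | cons pq rest ih =>
    intro f
    by_cases hadj : A.Adj pq.1 pq.2
    · have hne : f pq.1 ≠ f pq.2 := fun h => hadj.ne (f.injective h)
      obtain ⟨w⟩ := hconn.preconnected (f pq.1) (f pq.2)
      obtain ⟨L1, hL1, hfix, hadj'⟩ := walk_lemma w.toPath.val w.toPath.property hne
      obtain ⟨L2, hL2, hmeets⟩ := ih (f.trans (L1.reverse.prod : Equiv.Perm V))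
      refine ⟨L1 ++ L2, ?_, ?_⟩
      · intro π hπ
        rcases List.mem_append.mp hπ with hπ | hπ
        · exact hL1 π hπ
        · exact hL2 π hπ
      · intro pq' hpq' hadj''
        rcases List.mem_cons.mp hpq' with rfl | hpq'
        · refine ⟨L1.length, by simp, ?_⟩
          rw [List.take_append_of_le_length le_rfl, List.take_length]
          rw [show (L1.reverse.prod : Equiv.Perm V) (f pq'.2) = f pq'.2 from hfix]
          exact hadj'
        · obtain ⟨t', ht', hmt2⟩ := hmeets pq' hpq' hadj''
          refine ⟨L1.length + t', by simp [Nat.add_le_add_left ht'], ?_⟩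
          rw [List.take_append, List.reverse_append, List.prod_append]
          simpa [Equiv.Perm.mul_apply, List.take_of_length_le] using hmt2
    · obtain ⟨L, hL, hmeets⟩ := ih f
      refine ⟨L, hL, ?_⟩
      intro pq' hpq' hadj''
      rcases List.mem_cons.mp hpq' with rfl | hpq'
      · exact absurd hadj'' hadj
      · exact hmeets pq' hpq' hadj''

end Aux

section Aux2

variable {V Q : Type*} [Fintype V] [DecidableEq V] {H : SimpleGraph V} {A : SimpleGraph Q}

lemma decompose_aux : ∀ (n : ℕ) (π : Equiv.Perm V), π.support.card ≤ n → IsSwapLayer H π →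
    ∃ L : List (Equiv.Perm V),
      (∀ σ ∈ L, IsSwapLayer H σ ∧ σ.support.card = 2) ∧
      L.reverse.prod = π ∧ L.length = π.support.card / 2 := by
  intro n
  induction n with
  | zero =>
    intro π hcard _
    have : π = 1 := by
      rw [← Equiv.Perm.support_eq_empty_iff, ← Finset.card_eq_zero]
      omega
    exact ⟨[], by simp, by simp [this], by simp [this]⟩
  | succ n ihn =>
    intro π hcard hπ
    rcases eq_or_ne π 1 with rfl | h1
    · exact ⟨[], by simp, by simp, by simp⟩
    obtain ⟨a, ha⟩ : ∃ a, π a ≠ a := by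
      by_contra hc; push_neg at hc; exact h1 (Equiv.ext hc)
    have hadj : H.Adj a (π a) := (hπ.2 a).resolve_left ha
    have hne : a ≠ π a := hadj.ne
    set σ := Equiv.swap a (π a) with hσdef
    have hππa : π (π a) = a := by
      have h := congrArg (fun g : Equiv.Perm V => g a) hπ.1
      simpa [Equiv.Perm.mul_apply] using h
    have hcomm : π * σ = σ * π := by
      have h2 : Equiv.swap (π a) (π (π a)) = π * σ * π⁻¹ := Equiv.swap_apply_apply π a (π a)
      rw [hππa, Equiv.swap_comm, ← hσdef] at h2
      calc π * σ = π * σ * π⁻¹ * π := by group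
        _ = σ * π := by rw [← h2]
    set π' := π * σ with hπ'def
    have hπ'a : π' a = a := by
      simp only [hπ'def, Equiv.Perm.mul_apply, hσdef, Equiv.swap_apply_left, hππa]
    have hπ'πa : π' (π a) = π a := by
      simp only [hπ'def, Equiv.Perm.mul_apply, hσdef, Equiv.swap_apply_right]
    have hπ'app : ∀ v, v ≠ a → v ≠ π a → π' v = π v := by
      intro v h1 h2
      simp only [hπ'def, Equiv.Perm.mul_apply, hσdef, Equiv.swap_apply_of_ne_of_ne h1 h2]
    have hsupp : π'.support = π.support \ {a, π a} := by
      ext v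
      simp only [Equiv.Perm.mem_support, Finset.mem_sdiff, Finset.mem_insert,
        Finset.mem_singleton]
      constructor
      · intro hv
        rcases eq_or_ne v a with rfl | h1
        · exact absurd hπ'a hv
        rcases eq_or_ne v (π a) with rfl | h2
        · exact absurd hπ'πa hv
        rw [hπ'app v h1 h2] at hv
        exact ⟨hv, not_or.mpr ⟨h1, h2⟩⟩
      · rintro ⟨hv, hne'⟩
        push_neg at hne'
        rw [hπ'app v hne'.1 hne'.2]
        exact hv
    have hsub : ({a, π a} : Finset V) ⊆ π.support := by
      rw [Finset.insert_subset_iff, Finset.singleton_subset_iff]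
      constructor
      · exact Equiv.Perm.mem_support.mpr ha
      · refine Equiv.Perm.mem_support.mpr ?_
        rw [hππa]; exact hne
    have hcardpair : ({a, π a} : Finset V).card = 2 := Finset.card_pair hne
    have hc2 : 2 ≤ π.support.card := by
      rw [← hcardpair]; exact Finset.card_le_card hsub
    have hcard' : π'.support.card = π.support.card - 2 := by
      rw [hsupp, Finset.card_sdiff_of_subset hsub, hcardpair]
    have hinv' : IsSwapLayer H π' := by
      constructor
      · have hstep : π * σ * (π * σ) = π * (σ * π) * σ := by group
        rw [hπ'def, hstep, ← hcomm,
          show π * (π * σ) * σ = π * π * (σ * σ) by group, hπ.1,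
          hσdef, Equiv.swap_mul_self, one_mul]
      · intro v
        rcases eq_or_ne v a with rfl | h1
        · left; exact hπ'a
        rcases eq_or_ne v (π a) with rfl | h2
        · left; exact hπ'πa
        rw [hπ'app v h1 h2]
        exact hπ.2 v
    obtain ⟨L', hL', hprod, hlen⟩ := ihn π' (by omega) hinv'
    refine ⟨σ :: L', ?_, ?_, ?_⟩
    · intro τ hτ
      rcases List.mem_cons.mp hτ with rfl | hτ
      · exact ⟨isSwapLayer_swap hadj, Equiv.Perm.card_support_swap hne⟩
      · exact hL' τ hτ
    · rw [prod_reverse_cons, hprod, hπ'def, mul_assoc, hσdef, Equiv.swap_mul_self, mul_one]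
    · simp only [List.length_cons, hlen, hcard']
      omega

lemma flatten_layers (layers : List (Equiv.Perm V)) (h : ∀ π ∈ layers, IsSwapLayer H π) :
    ∃ L : List (Equiv.Perm V),
      (∀ σ ∈ L, IsSwapLayer H σ ∧ σ.support.card = 2) ∧
      L.length = (layers.map fun π => π.support.card / 2).sum ∧
      ∀ t ≤ layers.length, ∃ t' ≤ L.length,
        (L.take t').reverse.prod = (layers.take t).reverse.prod := by
  induction layers with
  | nil => exact ⟨[], by simp, by simp, fun t ht => ⟨0, by simpa using ht⟩⟩
  | cons π ls ih =>
    obtain ⟨D, hD, hDprod, hDlen⟩ :=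
      decompose_aux π.support.card π le_rfl (h π List.mem_cons_self)
    obtain ⟨L', hL', hlen', htimes'⟩ := ih (fun τ hτ => h τ (List.mem_cons_of_mem π hτ))
    refine ⟨D ++ L', ?_, ?_, ?_⟩
    · intro τ hτ
      rcases List.mem_append.mp hτ with hτ | hτ
      · exact hD τ hτ
      · exact hL' τ hτ
    · simp [hDlen, hlen']
    · intro t ht
      rcases Nat.eq_zero_or_pos t with rfl | hpos
      · exact ⟨0, Nat.zero_le _, by simp⟩
      obtain ⟨t0, rfl⟩ := Nat.exists_eq_add_of_le hpos
      rw [List.length_cons, Nat.add_comm 1 t0, Nat.add_le_add_iff_right] at ht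
      obtain ⟨t0', ht0', hprod'⟩ := htimes' t0 ht
      refine ⟨D.length + t0', by simp [Nat.add_le_add_left ht0'], ?_⟩
      rw [List.take_append, List.reverse_append, List.prod_append, Nat.add_sub_cancel_left,
        List.take_of_length_le (Nat.le_add_right D.length t0'),
        show (1 + t0) = t0 + 1 from Nat.add_comm 1 t0, List.take_succ_cons,
        prod_reverse_cons, hprod', hDprod]

lemma sum_map_eq_length (L : List (Equiv.Perm V)) (h : ∀ σ ∈ L, σ.support.card = 2) :
    (L.map fun σ => σ.support.card / 2).sum = L.length := by
  induction L with
  | nil => simp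
  | cons σ ls ih =>
    simp only [List.map_cons, List.sum_cons, List.length_cons,
      h σ List.mem_cons_self]
    rw [ih (fun τ hτ => h τ (List.mem_cons_of_mem σ hτ))]
    omega

lemma exists_solution_steps_swaps (s : TMPSolution H A) {t : ℕ} (ht : s.swaps ≤ t) :
    ∃ s' : TMPSolution H A, s'.steps = t ∧ s'.swaps = s.swaps := by
  obtain ⟨L, hL, hlen, htimes⟩ := flatten_layers s.layers s.isSwapLayer
  have hLswaps : (L.map fun σ => σ.support.card / 2).sum = s.swaps := by
    rw [sum_map_eq_length L (fun σ hσ => (hL σ hσ).2), hlen]; rfl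
  refine ⟨⟨s.init, L ++ List.replicate (t - s.swaps) 1, ?_, ?_⟩, ?_, ?_⟩
  · intro π hπ
    rcases List.mem_append.mp hπ with hπ | hπ
    · exact (hL π hπ).1
    · rw [List.eq_of_mem_replicate hπ]
      exact isSwapLayer_one
  · intro p q hpq
    obtain ⟨t0, ht0, hadj⟩ := s.meets p q hpq
    obtain ⟨t', ht', hprod⟩ := htimes t0 ht0
    refine ⟨t', by simp; omega, ?_⟩
    rw [List.take_append_of_le_length ht', hprod]
    exact hadj
  · show (L ++ List.replicate (t - s.swaps) 1).length = t
    simp only [List.length_append, List.length_replicate, hlen]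
    have : (List.map (fun π => π.support.card / 2) s.layers).sum = s.swaps := rfl
    omega
  · show ((L ++ List.replicate (t - s.swaps) 1).map fun π : Equiv.Perm V => π.support.card / 2).sum = s.swaps
    rw [List.map_append, List.sum_append, hLswaps]
    have : ((List.replicate (t - s.swaps) (1 : Equiv.Perm V)).map
        fun π => π.support.card / 2).sum = 0 := by
      simp
    omega

lemma exists_solution [Fintype Q] (hcard : Fintype.card V = Fintype.card Q)
    (hconn : H.Connected) : Nonempty (TMPSolution H A) := by
  classical
  obtain ⟨f⟩ := Fintype.card_eq.mp hcard.symm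
  obtain ⟨L, hL, hmeets⟩ := meets_list (A := A) hconn (Finset.univ : Finset (Q × Q)).toList f
  refine ⟨⟨f, L, hL, ?_⟩⟩
  intro p q hpq
  exact hmeets (p, q) (Finset.mem_toList.mpr (Finset.mem_univ _)) hpq

end Aux2

/-- `MS(H, A, t) = t` holds if and only if `t = MS(H, A)`. -/
theorem MSt_eq_self_iff_eq_MS {V Q : Type*} [Fintype V] [DecidableEq V] [Fintype Q]
    (H : SimpleGraph V) (A : SimpleGraph Q) (hcard : Fintype.card V = Fintype.card Q)
    (hconn : H.Connected) (t : ℕ) :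
    MSt H A t = (t : ℕ∞) ↔ (t : ℕ∞) = MS H A := by
  classical
  obtain ⟨s₀⟩ := exists_solution (H := H) (A := A) hcard hconn
  have hSne : {n : ℕ∞ | ∃ s : TMPSolution H A, n = (s.swaps : ℕ∞)}.Nonempty :=
    ⟨(s₀.swaps : ℕ∞), s₀, rfl⟩
  obtain ⟨sm, hsm⟩ : MS H A ∈ {n : ℕ∞ | ∃ s : TMPSolution H A, n = (s.swaps : ℕ∞)} :=
    csInf_mem hSne
  have hMS_le : MS H A ≤ MSt H A t := by
    apply sInf_le_sInf
    rintro n ⟨s, _, hs⟩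
    exact ⟨s, hs⟩
  have key : sm.swaps ≤ t → MSt H A t = MS H A := by
    intro hmt
    refine le_antisymm ?_ hMS_le
    obtain ⟨s', h1, h2⟩ := exists_solution_steps_swaps sm hmt
    calc MSt H A t ≤ (s'.swaps : ℕ∞) := sInf_le ⟨s', h1, rfl⟩
      _ = (sm.swaps : ℕ∞) := by rw [h2]
      _ = MS H A := hsm.symm
  constructor
  · intro h
    have hle : ((sm.swaps : ℕ) : ℕ∞) ≤ (t : ℕ∞) := by
      rw [← hsm]
      exact hMS_le.trans_eq h
    have hmt : sm.swaps ≤ t := by exact_mod_cast hle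
    rw [← h, key hmt]
  · intro h
    have hmt : ((sm.swaps : ℕ) : ℕ∞) = (t : ℕ∞) := by rw [← hsm, ← h]
    have : sm.swaps ≤ t := by
      have := hmt
      exact_mod_cast this.le
    rw [key this, ← h]
end

section
/- Let (H, A) be a TMP instance on n nodes with H connected. Then MT(H, A) ≤ MS(H, A) ≤ ⌊n/2⌋ · MT(H, A). -/
/- ## Auxiliary lemmas -/


private lemma prod_filter_of_ne_one {G : Type*} [Monoid G] {p : G → Bool} {l : List G}
    (h : ∀ x ∈ l, p x = false → x = 1) : (l.filter p).prod = l.prod := by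
  induction l with
  | nil => simp
  | cons a l ih =>
    have ih' := ih fun x hx => h x (List.mem_cons_of_mem _ hx)
    by_cases ha : p a
    · simp [List.filter_cons, ha, ih']
    · have ha1 : a = 1 := h a List.mem_cons_self (by simpa using ha)
      rw [List.filter_cons, if_neg ha, ih', ha1, List.prod_cons, one_mul]

private lemma length_le_sum {l : List ℕ} (h : ∀ x ∈ l, 1 ≤ x) : l.length ≤ l.sum := by
  induction l with
  | nil => simp
  | cons a l ih =>
    have := h a List.mem_cons_self
    have := ih fun x hx => h x (List.mem_cons_of_mem _ hx)
    simp only [List.length_cons, List.sum_cons]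
    omega

section Reduce

variable {V Q : Type*} {H : SimpleGraph V} {A : SimpleGraph Q}
variable [Fintype V] [DecidableEq V]

/-- The predicate selecting non-identity layers. -/
private def pne (π : Equiv.Perm V) : Bool := decide (π.support ≠ ∅)

private lemma pne_false {π : Equiv.Perm V} (h : pne π = false) : π = 1 := by
  have : π.support = ∅ := by simpa [pne] using h
  exact Equiv.Perm.support_eq_empty_iff.mp this

private lemma pne_true {π : Equiv.Perm V} (h : pne π = true) : π ≠ 1 := by
  intro h1
  have : π.support ≠ ∅ := by simpa [pne] using h
  exact this (by simp [h1])

/-- Removing identity layers from a solution. -/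
private def reduce (s : TMPSolution H A) : TMPSolution H A where
  init := s.init
  layers := s.layers.filter pne
  isSwapLayer := fun π hπ => s.isSwapLayer π (List.mem_of_mem_filter hπ)
  meets := by
    intro p q hpq
    obtain ⟨t, ht, hadj⟩ := s.meets p q hpq
    refine ⟨((s.layers.take t).filter pne).length, ?_, ?_⟩
    · exact ((s.layers.take_sublist t).filter pne).length_le
    · have hkey : (s.layers.filter pne).take ((s.layers.take t).filter pne).length
          = (s.layers.take t).filter pne := by
        have h1 : s.layers.filter pne
            = (s.layers.take t).filter pne ++ (s.layers.drop t).filter pne := by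
          rw [← List.filter_append, List.take_append_drop]
        rw [h1]
        exact List.take_left
      rw [hkey]
      have : ((s.layers.take t).filter pne).reverse.prod
          = (s.layers.take t).reverse.prod := by
        rw [← List.filter_reverse]
        exact prod_filter_of_ne_one fun x hx hf =>
          pne_false hf
      rw [this]
      exact hadj

private lemma reduce_steps_le_swaps (s : TMPSolution H A) :
    (reduce s).steps ≤ (reduce s).swaps := by
  unfold TMPSolution.steps TMPSolution.swaps
  rw [← List.length_map (fun π : Equiv.Perm V => π.support.card / 2)]
  apply length_le_sum
  intro x hx
  obtain ⟨π, hπ, rfl⟩ := List.mem_map.mp hx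
  have hne : π ≠ 1 := pne_true (List.of_mem_filter hπ)
  have := Equiv.Perm.one_lt_card_support_of_ne_one hne
  omega

private lemma reduce_swaps_le (s : TMPSolution H A) :
    (reduce s).swaps ≤ s.swaps := by
  unfold TMPSolution.swaps
  exact ((List.filter_sublist (p := pne) (l := s.layers)).map _).sum_le_sum fun a _ => Nat.zero_le a

private lemma exists_steps_le_swaps (s : TMPSolution H A) :
    ∃ s' : TMPSolution H A, s'.steps ≤ s.swaps :=
  ⟨reduce s, (reduce_steps_le_swaps s).trans (reduce_swaps_le s)⟩

private lemma swaps_le_half_mul_steps (s : TMPSolution H A) (n : ℕ)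
    (hV : Fintype.card V = n) : s.swaps ≤ (n / 2) * s.steps := by
  unfold TMPSolution.swaps TMPSolution.steps
  have h := List.sum_le_card_nsmul (s.layers.map fun π => π.support.card / 2) (n / 2) ?_
  · simpa [smul_eq_mul, mul_comm] using h
  · intro x hx
    obtain ⟨π, hπ, rfl⟩ := List.mem_map.mp hx
    have : π.support.card ≤ n := hV ▸ π.support.card_le_univ
    omega

end Reduce

/-- `MT(H,A) ≤ MS(H,A) ≤ ⌊n/2⌋ · MT(H,A)`. -/
theorem MT_le_MS_le {V Q : Type*} [Fintype V] [DecidableEq V] [Fintype Q]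
    (H : SimpleGraph V) (A : SimpleGraph Q) (n : ℕ)
    (hV : Fintype.card V = n) (hQ : Fintype.card Q = n) (hconn : H.Connected) :
    MT H A ≤ MS H A ∧ MS H A ≤ ((n / 2 : ℕ) : ℕ∞) * MT H A := by
  constructor
  · -- MT ≤ MS
    apply le_sInf
    rintro b ⟨s, rfl⟩
    obtain ⟨s', hs'⟩ := exists_steps_le_swaps s
    calc MT H A ≤ (s'.steps : ℕ∞) := sInf_le ⟨s', rfl⟩
      _ ≤ (s.swaps : ℕ∞) := by exact_mod_cast hs'
  · -- MS ≤ (n/2) * MT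
    by_cases hex : Nonempty (TMPSolution H A)
    · -- sInf of nonempty MT set is attained
      have hne : {m : ℕ∞ | ∃ s : TMPSolution H A, m = (s.steps : ℕ∞)}.Nonempty :=
        ⟨_, hex.some, rfl⟩
      obtain ⟨s, hs⟩ := csInf_mem hne
      calc MS H A ≤ (s.swaps : ℕ∞) := sInf_le ⟨s, rfl⟩
        _ ≤ (((n / 2) * s.steps : ℕ) : ℕ∞) := by
            exact_mod_cast swaps_le_half_mul_steps s n hV
        _ = ((n / 2 : ℕ) : ℕ∞) * (s.steps : ℕ∞) := by push_cast; ring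
        _ = ((n / 2 : ℕ) : ℕ∞) * MT H A := by rw [MT, ← hs]
    · -- no solution: both sets empty
      rcases le_or_gt 2 n with hn | hn
      · have hMT : MT H A = ⊤ := by
          rw [MT]
          have hS : {m : ℕ∞ | ∃ s : TMPSolution H A, m = (s.steps : ℕ∞)} = ∅ := by
            ext m
            simp only [Set.mem_setOf_eq, Set.mem_empty_iff_false, iff_false]
            rintro ⟨s, -⟩
            exact hex ⟨s⟩
          rw [hS]
          exact sInf_empty
        rw [hMT, ENat.mul_top]
        · exact le_top
        · have : 1 ≤ n / 2 := by omega
          exact_mod_cast Nat.one_le_iff_ne_zero.mp this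
      · -- n ≤ 1 : a trivial solution exists, contradiction
        exfalso
        apply hex
        have hcard : Fintype.card Q = Fintype.card V := by omega
        refine ⟨⟨Fintype.equivOfCardEq hcard, [], by simp, ?_⟩⟩
        intro p q hpq
        have : Subsingleton Q := Fintype.card_le_one_iff_subsingleton.mp (by omega)
        exact absurd (Subsingleton.elim p q) (A.ne_of_adj hpq)
end

section
/- Every TMP instance (H, A) on n ≥ 3 nodes with H connected admits a solution with at most (n−2)² swaps and at most (n−2)² steps; in particular MS(H, A) ≤ (n−2)² and MT(H, A) ≤ (n−2)², so both the minimum number of swaps and the minimum number of steps are O(n²). -/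
set_option linter.unusedSectionVars false
set_option maxHeartbeats 1000000

namespace TMPaux
open SimpleGraph


variable {V : Type*} [DecidableEq V] {H : SimpleGraph V}

/-- prefix product of layers -/
def pp (L : List (Equiv.Perm V)) (t : ℕ) : Equiv.Perm V := ((L.take t).reverse).prod

@[simp] lemma pp_zero (L : List (Equiv.Perm V)) : pp L 0 = 1 := rfl

@[simp] lemma pp_nil (t : ℕ) : pp ([] : List (Equiv.Perm V)) t = 1 := by
  simp [pp]

lemma pp_cons (π : Equiv.Perm V) (L : List (Equiv.Perm V)) (t : ℕ) :
    pp (π :: L) (t + 1) = pp L t * π := by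
  simp [pp, List.take_succ_cons]

lemma pp_cons_apply (π : Equiv.Perm V) (L : List (Equiv.Perm V)) (t : ℕ) (v : V) :
    pp (π :: L) (t + 1) v = pp L t (π v) := by
  rw [pp_cons]; rfl

lemma pp_append_left (L₁ L₂ : List (Equiv.Perm V)) {t : ℕ} (h : t ≤ L₁.length) :
    pp (L₁ ++ L₂) t = pp L₁ t := by
  simp [pp, List.take_append_of_le_length h]

lemma pp_append (L₁ L₂ : List (Equiv.Perm V)) (t : ℕ) :
    pp (L₁ ++ L₂) (L₁.length + t) = pp L₂ t * pp L₁ L₁.length := by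
  simp [pp, List.take_append, List.reverse_append, List.prod_append, List.take_length,
    List.take_of_length_le]

/-- the list of transpositions along a walk -/
def swapList : List V → List (Equiv.Perm V)
  | a :: b :: l => Equiv.swap a b :: swapList (b :: l)
  | _ => []

@[simp] lemma swapList_nil : swapList ([] : List V) = [] := rfl
@[simp] lemma swapList_single (a : V) : swapList [a] = [] := rfl
@[simp] lemma swapList_cons2 (a b : V) (l : List V) :
    swapList (a :: b :: l) = Equiv.swap a b :: swapList (b :: l) := rfl

lemma swapList_length (a : V) (l : List V) :
    (swapList (a :: l)).length = l.length := by
  induction l generalizing a with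
  | nil => rfl
  | cons b l ih => simp [ih b]

lemma swapList_mem {as : List V} (hc : List.Chain' H.Adj as) :
    ∀ π ∈ swapList as, ∃ a b, a ∈ as ∧ b ∈ as ∧ H.Adj a b ∧ π = Equiv.swap a b := by
  induction as with
  | nil => simp
  | cons a l ih =>
    cases l with
    | nil => simp
    | cons b l' =>
      intro π hπ
      rw [swapList_cons2] at hπ
      rcases List.mem_cons.1 hπ with h | h
      · exact ⟨a, b, by simp, by simp, (List.isChain_cons_cons.1 hc).1, h⟩
      · obtain ⟨x, y, hx, hy, hxy, rfl⟩ := ih (List.isChain_cons_cons.1 hc).2 π h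
        exact ⟨x, y, List.mem_cons_of_mem _ hx, List.mem_cons_of_mem _ hy, hxy, rfl⟩

/-- head of the walk travels along the walk; final position is the last vertex -/
lemma pp_swapList_head (a : V) (l : List V) :
    pp (swapList (a :: l)) (swapList (a :: l)).length a
      = (a :: l).getLast (List.cons_ne_nil a l) := by
  induction l generalizing a with
  | nil => simp
  | cons b l' ih =>
    rw [swapList_cons2]
    have hl : (Equiv.swap a b :: swapList (b :: l')).length = l'.length + 1 := by
      simp [swapList_length]
    rw [hl, pp_cons_apply, Equiv.swap_apply_left]
    have h2 := ih b
    rw [swapList_length] at h2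
    rw [h2, List.getLast_cons (List.cons_ne_nil b l')]

/-- vertices not on the walk never move -/
lemma pp_swapList_fix {as : List V} {u : V} (hu : u ∉ as) (t : ℕ) :
    pp (swapList as) t u = u := by
  induction as generalizing t with
  | nil => simp
  | cons a l ih =>
    cases l with
    | nil => simp
    | cons b l' =>
      cases t with
      | zero => simp
      | succ t =>
        rw [swapList_cons2, pp_cons_apply,
          Equiv.swap_apply_of_ne_of_ne (by simp at hu; tauto) (by simp at hu; tauto)]
        exact ih (by simp at hu ⊢; tauto) t

/-- the walk stays inside `S` -/
lemma pp_swapList_memS {S : Finset V} {as : List V} (hmem : ∀ x ∈ as, x ∈ S)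
    (t : ℕ) {v : V} (hv : v ∈ S) : pp (swapList as) t v ∈ S := by
  induction as generalizing t v with
  | nil => simpa using hv
  | cons a l ih =>
    cases l with
    | nil => simpa using hv
    | cons b l' =>
      cases t with
      | zero => simpa using hv
      | succ t =>
        rw [swapList_cons2, pp_cons_apply]
        refine ih (fun x hx => hmem x (List.mem_cons_of_mem _ hx)) t ?_
        by_cases h1 : v = a
        · simpa [h1] using hmem b (by simp)
        · by_cases h2 : v = b
          · simpa [h1, h2] using hmem a (by simp)
          · simpa [Equiv.swap_apply_of_ne_of_ne h1 h2] using hv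

/-- KEY : the head token meets every token on a vertex that the walk visits or dominates -/
lemma key_meet {as : List V} (hne : as ≠ []) (hc : List.Chain' H.Adj as) {u : V}
    (hu : u ≠ as.head hne) (hdom : u ∈ as ∨ ∃ a ∈ as, H.Adj a u) :
    ∃ t ≤ (swapList as).length,
      H.Adj (pp (swapList as) t (as.head hne)) (pp (swapList as) t u) := by
  induction as with
  | nil => exact absurd rfl hne
  | cons a l ih =>
    cases l with
    | nil =>
      refine ⟨0, le_rfl, ?_⟩
      simp only [List.head_cons] at hu
      rcases hdom with h | ⟨a', ha', h⟩
      · simp at h; exact absurd h hu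
      · simp at ha'; subst ha'; simpa using h
    | cons b l' =>
      simp only [List.head_cons] at hu ⊢
      have hcadj : H.Adj a b := (List.isChain_cons_cons.1 hc).1
      by_cases hadj : H.Adj a u
      · exact ⟨0, Nat.zero_le _, by simpa using hadj⟩
      · have hub : u ≠ b := by rintro rfl; exact hadj hcadj
        have hdom' : u ∈ (b :: l') ∨ ∃ a' ∈ (b :: l'), H.Adj a' u := by
          rcases hdom with h | ⟨a', ha', h⟩
          · left; rcases List.mem_cons.1 h with h | h
            · exact absurd h hu
            · exact h
          · right; rcases List.mem_cons.1 ha' with rfl | ha'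
            · exact absurd h hadj
            · exact ⟨a', ha', h⟩
        obtain ⟨t, ht, hA⟩ := ih (List.cons_ne_nil b l') (List.isChain_cons_cons.1 hc).2
          (by simpa using hub) hdom'
        refine ⟨t + 1, ?_, ?_⟩
        · rw [swapList_cons2, List.length_cons]; omega
        · rw [swapList_cons2, pp_cons_apply, pp_cons_apply, Equiv.swap_apply_left,
            Equiv.swap_apply_of_ne_of_ne hu hub]
          simpa using hA



/-- connectivity within a finite vertex set -/
def SConn (H : SimpleGraph V) (S : Finset V) : Prop :=
  ∀ a ∈ S, ∀ b ∈ S, ∃ w : H.Walk a b, ∀ x ∈ w.support, x ∈ S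

lemma sconn_pair {a b : V} (h : H.Adj a b) : SConn H {a, b} := by
  have hw : ∃ w : H.Walk a b, ∀ x ∈ w.support, x ∈ ({a, b} : Finset V) := by
    refine ⟨Walk.cons h Walk.nil, ?_⟩
    intro x hx
    simp [Walk.support_cons] at hx
    rcases hx with rfl | rfl <;> simp
  intro x hx y hy
  simp at hx hy
  rcases hx with rfl | rfl <;> rcases hy with rfl | rfl
  · exact ⟨Walk.nil, by simp⟩
  · exact hw
  · obtain ⟨w, hw'⟩ := hw
    exact ⟨w.reverse, by intro z hz; rw [Walk.support_reverse, List.mem_reverse] at hz; exact hw' z hz⟩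
  · exact ⟨Walk.nil, by simp⟩

lemma sconn_insert {S : Finset V} (hS : SConn H S) {x y : V} (hy : y ∈ S)
    (hxy : H.Adj x y) : SConn H (insert x S) := by
  have haux : ∀ a ∈ insert x S, ∃ w : H.Walk a y, ∀ z ∈ w.support, z ∈ insert x S := by
    intro a ha
    rcases Finset.mem_insert.1 ha with rfl | ha
    · refine ⟨Walk.cons hxy Walk.nil, ?_⟩
      intro z hz; simp [Walk.support_cons] at hz
      rcases hz with rfl | rfl
      · exact Finset.mem_insert_self _ _
      · exact Finset.mem_insert_of_mem hy
    · obtain ⟨w, hw⟩ := hS a ha y hy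
      exact ⟨w, fun z hz => Finset.mem_insert_of_mem (hw z hz)⟩
  intro a ha b hb
  obtain ⟨wa, hwa⟩ := haux a ha
  obtain ⟨wb, hwb⟩ := haux b hb
  refine ⟨wa.append wb.reverse, ?_⟩
  intro z hz
  rw [Walk.support_append] at hz
  rcases List.mem_append.1 hz with hz | hz
  · exact hwa z hz
  · exact hwb z (by
      have := List.mem_of_mem_tail hz
      rwa [Walk.support_reverse, List.mem_reverse] at this)

lemma sconn_neighbor {S : Finset V} (hS : SConn H S) {a b : V} (ha : a ∈ S)
    (hb : b ∈ S) (hab : a ≠ b) : ∃ c ∈ S, H.Adj a c := by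
  obtain ⟨w, hw⟩ := hS a ha b hb
  cases w with
  | nil => exact absurd rfl hab
  | cons h p =>
    exact ⟨_, hw _ (by rw [Walk.support_cons]; exact List.mem_cons_of_mem _ p.start_mem_support), h⟩

/-- existence of a non-cut vertex with a neighbour, avoiding a designated vertex -/
lemma exists_noncut {S : Finset V} (hS : SConn H S) (h2 : 2 ≤ S.card) {v₀ : V}
    (hv₀ : v₀ ∈ S) :
    ∃ x ∈ S, x ≠ v₀ ∧ SConn H (S.erase x) ∧ ∃ y ∈ S.erase x, H.Adj x y := by
  classical
  set T : V → Set ℕ := fun u => {n | ∃ w : H.Walk v₀ u, w.length = n ∧ ∀ z ∈ w.support, z ∈ S}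
    with hT
  have hTne : ∀ u ∈ S, (T u).Nonempty := by
    intro u hu
    obtain ⟨w, hw⟩ := hS v₀ hv₀ u hu
    exact ⟨w.length, w, rfl, hw⟩
  set D : V → ℕ := fun u => sInf (T u) with hD
  have hwit : ∀ u ∈ S, ∃ w : H.Walk v₀ u, w.length = D u ∧ ∀ z ∈ w.support, z ∈ S := by
    intro u hu
    have := Nat.sInf_mem (hTne u hu)
    exact this
  have hle : ∀ (u : V) (w : H.Walk v₀ u), (∀ z ∈ w.support, z ∈ S) → D u ≤ w.length := by
    intro u w hw
    exact Nat.sInf_le ⟨w, rfl, hw⟩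
  have hne : (S.erase v₀).Nonempty := by
    rw [← Finset.card_pos, Finset.card_erase_of_mem hv₀]; omega
  obtain ⟨x, hx, hmax⟩ := Finset.exists_max_image (S.erase v₀) D hne
  have hxS : x ∈ S := Finset.mem_of_mem_erase hx
  have hxv₀ : x ≠ v₀ := Finset.ne_of_mem_erase hx
  -- every other vertex reachable from v₀ avoiding x
  have havoid : ∀ u ∈ S, u ≠ x → ∃ w : H.Walk v₀ u, (∀ z ∈ w.support, z ∈ S) ∧ x ∉ w.support := by
    intro u hu hux
    by_cases huv : u = v₀
    · subst huv
      exact ⟨Walk.nil, by simpa using hv₀, by simpa using hxv₀⟩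
    · obtain ⟨w, hwl, hwS⟩ := hwit u hu
      refine ⟨w, hwS, ?_⟩
      intro hxsup
      have hsplit := congrArg Walk.length (w.take_spec hxsup)
      rw [Walk.length_append] at hsplit
      have h1 : D x ≤ (w.takeUntil x hxsup).length :=
        hle x _ (fun z hz => hwS z (w.support_takeUntil_subset hxsup hz))
      have h2 : 1 ≤ (w.dropUntil x hxsup).length := by
        by_contra hcon
        push_neg at hcon
        interval_cases h : (w.dropUntil x hxsup).length
        · exact hux (Walk.eq_of_length_eq_zero h).symm
      have hmaxu : D u ≤ D x := hmax u (Finset.mem_erase.2 ⟨huv, hu⟩)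
      omega
  refine ⟨x, hxS, hxv₀, ?_, ?_⟩
  · intro a ha b hb
    obtain ⟨wa, hwaS, hwax⟩ := havoid a (Finset.mem_of_mem_erase ha) (Finset.ne_of_mem_erase ha)
    obtain ⟨wb, hwbS, hwbx⟩ := havoid b (Finset.mem_of_mem_erase hb) (Finset.ne_of_mem_erase hb)
    refine ⟨wa.reverse.append wb, ?_⟩
    intro z hz
    rw [Walk.support_append] at hz
    rcases List.mem_append.1 hz with hz | hz
    · rw [Walk.support_reverse, List.mem_reverse] at hz
      exact Finset.mem_erase.2 ⟨fun h => hwax (h ▸ hz), hwaS z hz⟩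
    · have hz' := List.mem_of_mem_tail hz
      exact Finset.mem_erase.2 ⟨fun h => hwbx (h ▸ hz'), hwbS z hz'⟩
  · obtain ⟨w, hwl, hwS⟩ := hwit x hxS
    have hlen : 1 ≤ w.length := by
      by_contra hcon
      push_neg at hcon
      interval_cases h : w.length
      · exact hxv₀ (Walk.eq_of_length_eq_zero h).symm
    set c : V := w.getVert (w.length - 1) with hc
    have hadj : H.Adj c x := by
      have := w.adj_getVert_succ (i := w.length - 1) (by omega)
      rwa [show w.length - 1 + 1 = w.length by omega, Walk.getVert_length] at this
    refine ⟨c, Finset.mem_erase.2 ⟨hadj.ne, ?_⟩, hadj.symm⟩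
    exact hwS c (Walk.mem_support_iff_exists_getVert.2 ⟨w.length - 1, rfl, by omega⟩)




/-- center of a connected 3-set -/
lemma center3 {S : Finset V} (hS : SConn H S) (h3 : S.card = 3) :
    ∃ c u v : V, c ∈ S ∧ u ∈ S ∧ v ∈ S ∧ c ≠ u ∧ c ≠ v ∧ u ≠ v ∧
      H.Adj c u ∧ H.Adj c v ∧ S = {c, u, v} := by
  obtain ⟨x, y, z, hxy, hxz, hyz, rfl⟩ := Finset.card_eq_three.1 h3
  have hx : x ∈ ({x, y, z} : Finset V) := by simp
  have hy : y ∈ ({x, y, z} : Finset V) := by simp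
  have hz : z ∈ ({x, y, z} : Finset V) := by simp
  -- helper: given Adj x y (after renaming), find the center
  have helper : ∀ a b c : V, a ≠ b → a ≠ c → b ≠ c → ({a, b, c} : Finset V) = {x, y, z} →
      H.Adj a b →
      ∃ cc u v : V, cc ∈ ({x,y,z} : Finset V) ∧ u ∈ ({x,y,z} : Finset V) ∧
        v ∈ ({x,y,z} : Finset V) ∧ cc ≠ u ∧ cc ≠ v ∧ u ≠ v ∧
        H.Adj cc u ∧ H.Adj cc v ∧ ({x,y,z} : Finset V) = {cc, u, v} := by
    intro a b c hab hac hbc hset hadj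
    have haS : a ∈ ({x,y,z} : Finset V) := by rw [← hset]; simp
    have hbS : b ∈ ({x,y,z} : Finset V) := by rw [← hset]; simp
    have hcS : c ∈ ({x,y,z} : Finset V) := by rw [← hset]; simp
    by_cases h1 : H.Adj a c
    · exact ⟨a, b, c, haS, hbS, hcS, hab, hac, hbc, hadj, h1, hset.symm⟩
    · by_cases h2 : H.Adj b c
      · refine ⟨b, a, c, hbS, haS, hcS, Ne.symm hab, hbc, hac, hadj.symm, h2, ?_⟩
        rw [← hset]; ext w; simp; tauto
      · exfalso
        obtain ⟨d, hdS, hd⟩ := sconn_neighbor hS hcS haS (Ne.symm hac)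
        rw [← hset] at hdS
        simp at hdS
        rcases hdS with rfl | rfl | rfl
        · exact h1 hd.symm
        · exact h2 hd.symm
        · exact H.irrefl hd
  -- first edge at x
  obtain ⟨d, hdS, hd⟩ := sconn_neighbor hS hx hy hxy
  simp at hdS
  rcases hdS with rfl | rfl | rfl
  · exact absurd hd (H.irrefl)
  · exact helper x d z hxy hxz hyz rfl hd
  · refine helper x d y hxz hxy (Ne.symm hyz) (by ext w; simp; tauto) hd

/-- the walk package -/
structure Pkg (H : SimpleGraph V) (S : Finset V) where
  as : List V
  ne : as ≠ []
  mem : ∀ a ∈ as, a ∈ S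
  chain : List.Chain' H.Adj as
  lenle : as.length ≤ 2 * S.card - 4
  dom : ∀ u ∈ S, u ∈ as ∨ ∃ a ∈ as, H.Adj a u
  conn : SConn H (S.erase (as.getLast ne))

def Pkg.last {S : Finset V} (p : Pkg H S) : V := p.as.getLast p.ne

lemma Pkg.last_mem {S : Finset V} (p : Pkg H S) : p.last ∈ S :=
  p.mem _ (List.getLast_mem p.ne)

lemma Pkg.conn' {S : Finset V} (p : Pkg H S) : SConn H (S.erase p.last) := p.conn




lemma getLast_of_getLast? {α : Type*} {l l' : List α} (h : l ≠ []) (h' : l' ≠ [])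
    (hq : l.getLast? = l'.getLast?) : l.getLast h = l'.getLast h' := by
  rw [List.getLast?_eq_getLast h, List.getLast?_eq_getLast h'] at hq
  exact Option.some.inj hq

lemma getLast_surgery (s t : List V) (a z : V) :
    (s ++ a :: z :: a :: t).getLast (by simp) = (s ++ a :: t).getLast (by simp) := by
  apply getLast_of_getLast? (by simp) (by simp)
  rw [List.getLast?_append_cons, List.getLast?_append_cons]
  show ([a, z] ++ a :: t).getLast? = _
  rw [List.getLast?_append_cons]

lemma extend_pkg {S : Finset V} {x : V} (hx : x ∈ S) (h4 : 4 ≤ S.card)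
    (p : Pkg H (S.erase x))
    (hz : ∃ z ∈ S.erase x, z ≠ p.last ∧ H.Adj x z) :
    ∃ q : Pkg H S, q.last = p.last := by
  obtain ⟨z, hzS, hzlast, hxz⟩ := hz
  have hcard : (S.erase x).card = S.card - 1 := Finset.card_erase_of_mem hx
  have hxlast : p.last ≠ x := (Finset.mem_erase.1 p.last_mem).1
  have hconnS : SConn H (S.erase p.last) := by
    have hset : S.erase p.last = insert x ((S.erase x).erase p.last) := by
      ext w
      simp only [Finset.mem_erase, Finset.mem_insert]
      constructor
      · rintro ⟨h1, h2⟩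
        by_cases hwx : w = x
        · exact Or.inl hwx
        · exact Or.inr ⟨h1, hwx, h2⟩
      · rintro (rfl | ⟨h1, h2, h3⟩)
        · exact ⟨fun h => hxlast h.symm, hx⟩
        · exact ⟨h1, h3⟩
    rw [hset]
    exact sconn_insert p.conn' (Finset.mem_erase.2 ⟨hzlast, hzS⟩) hxz
  by_cases hzin : z ∈ p.as
  · refine ⟨⟨p.as, p.ne, fun a ha => Finset.mem_of_mem_erase (p.mem a ha), p.chain,
      ?_, ?_, ?_⟩, rfl⟩
    · have := p.lenle; omega
    · intro u hu
      by_cases hux : u = x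
      · exact Or.inr ⟨z, hzin, hux ▸ hxz.symm⟩
      · exact p.dom u (Finset.mem_erase.2 ⟨hux, hu⟩)
    · exact hconnS
  · have hdz := p.dom z hzS
    rcases hdz with h | ⟨a, ha, haz⟩
    · exact absurd h hzin
    obtain ⟨s, t, hst⟩ := List.append_of_mem ha
    have hne2 : (s ++ a :: z :: a :: t : List V) ≠ [] := by simp
    have hlast : (s ++ a :: z :: a :: t).getLast hne2 = p.last := by
      rw [getLast_surgery s t a z]
      show (s ++ a :: t).getLast _ = p.as.getLast p.ne
      congr 1
      · exact hst.symm
    have hmem2 : ∀ b ∈ (s ++ a :: z :: a :: t : List V), b ∈ S := by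
      intro b hb
      have hb' : b = z ∨ b ∈ p.as := by
        rw [hst]; simp at hb ⊢; tauto
      rcases hb' with rfl | hb'
      · exact Finset.mem_of_mem_erase hzS
      · exact Finset.mem_of_mem_erase (p.mem b hb')
    have hchain2 : List.Chain' H.Adj (s ++ a :: z :: a :: t) := by
      have hchain := p.chain
      simp only [List.Chain'] at hchain ⊢
      rw [hst, List.isChain_append] at hchain
      rw [List.isChain_append]
      refine ⟨hchain.1, ?_, ?_⟩
      · rw [List.isChain_cons_cons]
        refine ⟨haz, ?_⟩
        rw [List.isChain_cons_cons]
        exact ⟨haz.symm, hchain.2.1⟩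
      · simpa using hchain.2.2
    refine ⟨⟨s ++ a :: z :: a :: t, hne2, hmem2, hchain2, ?_, ?_, ?_⟩, hlast⟩
    · have h1 := p.lenle
      have h2 : (s ++ a :: z :: a :: t : List V).length = p.as.length + 2 := by
        rw [hst]; simp; omega
      omega
    · intro u hu
      by_cases hux : u = x
      · exact Or.inr ⟨z, by simp, hux ▸ hxz.symm⟩
      · rcases p.dom u (Finset.mem_erase.2 ⟨hux, hu⟩) with h | ⟨a', ha', h⟩
        · left; rw [hst] at h; simp at h ⊢; tauto
        · right; refine ⟨a', ?_, h⟩; rw [hst] at ha'; simp at ha' ⊢; tauto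
    · rw [hlast]; exact hconnS

lemma pend_pkg {S : Finset V} {x : V} (hx : x ∈ S) (h4 : 4 ≤ S.card)
    (p : Pkg H (S.erase x)) (hxy : H.Adj x p.last) (hSc : SConn H (S.erase x)) :
    ∃ q : Pkg H S, q.last = x := by
  have hcard : (S.erase x).card = S.card - 1 := Finset.card_erase_of_mem hx
  have hne2 : (p.as ++ [x] : List V) ≠ [] := by simp
  have hlast : (p.as ++ [x]).getLast hne2 = x := by
    rw [List.getLast_append_of_ne_nil _ (by simp)]
    rfl
  refine ⟨⟨p.as ++ [x], hne2, ?_, ?_, ?_, ?_, ?_⟩, hlast⟩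
  · intro b hb
    rcases List.mem_append.1 hb with hb | hb
    · exact Finset.mem_of_mem_erase (p.mem b hb)
    · simp at hb; exact hb ▸ hx
  · simp only [List.Chain']
    rw [List.isChain_append]
    refine ⟨p.chain, List.isChain_singleton x, ?_⟩
    intro x' hx' y' hy'
    simp at hy'
    rw [List.getLast?_eq_getLast p.ne] at hx'
    simp only [Option.mem_def, Option.some.injEq] at hx'
    rw [← hx', ← hy']
    exact hxy.symm
  · have := p.lenle
    have h2 : (p.as ++ [x] : List V).length = p.as.length + 1 := by simp
    omega
  · intro u hu
    by_cases hux : u = x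
    · exact Or.inl (by simp [hux])
    · rcases p.dom u (Finset.mem_erase.2 ⟨hux, hu⟩) with h | ⟨a', ha', h⟩
      · exact Or.inl (List.mem_append.2 (Or.inl h))
      · exact Or.inr ⟨a', List.mem_append.2 (Or.inl ha'), h⟩
  · rw [hlast]; exact hSc

lemma exists_pkgs : ∀ n : ℕ, ∀ S : Finset V, S.card = n → 3 ≤ n → SConn H S →
    ∃ p₁ p₂ : Pkg H S, p₁.last ≠ p₂.last := by
  intro n
  induction n using Nat.strong_induction_on with
  | _ n ih =>
  intro S hcard h3 hS
  by_cases hn3 : n = 3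
  · subst hn3
    obtain ⟨c, u, v, hc, hu, hv, hcu, hcv, huv, hadj1, hadj2, hset⟩ := center3 hS hcard
    have mk : ∀ u' v' : V, u' ∈ S → v' ∈ S → c ≠ u' → c ≠ v' → u' ≠ v' → H.Adj c u' →
        H.Adj c v' → S = {c, u', v'} → ∃ q : Pkg H S, q.last = u' := by
      intro u' v' hu' hv' hcu' hcv' huv' h1 h2 hset'
      have hne : ([c, u'] : List V) ≠ [] := by simp
      have hg : ([c, u'] : List V).getLast hne = u' := rfl
      have herase : S.erase u' = {c, v'} := by
        rw [hset']; ext w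
        simp only [Finset.mem_erase, Finset.mem_insert, Finset.mem_singleton]
        constructor
        · rintro ⟨h3, rfl | rfl | rfl⟩
          · exact Or.inl rfl
          · exact absurd rfl h3
          · exact Or.inr rfl
        · rintro (rfl | rfl)
          · exact ⟨hcu', Or.inl rfl⟩
          · exact ⟨fun h => huv' h.symm, Or.inr (Or.inr rfl)⟩
      refine ⟨⟨[c, u'], hne, ?_, ?_, ?_, ?_, ?_⟩, hg⟩
      · intro a ha; simp at ha; rcases ha with rfl | rfl; exacts [hc, hu']
      · exact List.isChain_pair.2 h1
      · rw [hcard]; norm_num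
      · intro w hw
        rw [hset'] at hw
        simp at hw
        rcases hw with rfl | rfl | rfl
        · exact Or.inl (by simp)
        · exact Or.inl (by simp)
        · exact Or.inr ⟨c, by simp, h2⟩
      · rw [hg, herase]
        exact sconn_pair h2
    obtain ⟨q₁, h₁⟩ := mk u v hu hv hcu hcv huv hadj1 hadj2 hset
    obtain ⟨q₂, h₂⟩ := mk v u hv hu hcv hcu (Ne.symm huv) hadj2 hadj1
      (by rw [hset]; ext w; simp; tauto)
    exact ⟨q₁, q₂, by rw [h₁, h₂]; exact huv⟩
  · have h4n : 4 ≤ n := by omega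
    have h4 : 4 ≤ S.card := by rw [hcard]; exact h4n
    obtain ⟨v₀, hv₀⟩ := Finset.card_pos.1 (by omega : 0 < S.card)
    obtain ⟨x, hxS, hxv₀, hSc, y, hy, hxy⟩ := exists_noncut hS (by omega) hv₀
    have hcard' : (S.erase x).card = n - 1 := by rw [Finset.card_erase_of_mem hxS, hcard]
    obtain ⟨p₁, p₂, hpp⟩ := ih (n - 1) (by omega) (S.erase x) hcard' (by omega) hSc
    by_cases hz₁ : ∃ z ∈ S.erase x, z ≠ p₁.last ∧ H.Adj x z
    · obtain ⟨q₁, hq₁⟩ := extend_pkg hxS h4 p₁ hz₁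
      by_cases hz₂ : ∃ z ∈ S.erase x, z ≠ p₂.last ∧ H.Adj x z
      · obtain ⟨q₂, hq₂⟩ := extend_pkg hxS h4 p₂ hz₂
        exact ⟨q₁, q₂, by rw [hq₁, hq₂]; exact hpp⟩
      · have hy2 : y = p₂.last := by
          by_contra h; exact hz₂ ⟨y, hy, h, hxy⟩
        obtain ⟨q₂, hq₂⟩ := pend_pkg hxS h4 p₂ (hy2 ▸ hxy) hSc
        refine ⟨q₁, q₂, ?_⟩
        rw [hq₁, hq₂]
        exact fun h => (Finset.mem_erase.1 p₁.last_mem).1 h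
    · have hy1 : y = p₁.last := by
        by_contra h; exact hz₁ ⟨y, hy, h, hxy⟩
      obtain ⟨q₁, hq₁⟩ := pend_pkg hxS h4 p₁ (hy1 ▸ hxy) hSc
      have hz₂ : ∃ z ∈ S.erase x, z ≠ p₂.last ∧ H.Adj x z := ⟨y, hy, hy1 ▸ hpp, hxy⟩
      obtain ⟨q₂, hq₂⟩ := extend_pkg hxS h4 p₂ hz₂
      refine ⟨q₁, q₂, ?_⟩
      rw [hq₁, hq₂]
      exact fun h => (Finset.mem_erase.1 p₂.last_mem).1 h.symm


lemma meets_all : ∀ n : ℕ, ∀ S : Finset V, S.card = n → 2 ≤ n → SConn H S →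
    ∃ L : List (Equiv.Perm V), L.length ≤ (n - 2) ^ 2 ∧
      (∀ π ∈ L, ∃ a b, a ∈ S ∧ b ∈ S ∧ H.Adj a b ∧ π = Equiv.swap a b) ∧
      ∀ v ∈ S, ∀ w ∈ S, v ≠ w → ∃ t ≤ L.length, H.Adj (pp L t v) (pp L t w) := by
  intro n
  induction n using Nat.strong_induction_on with
  | _ n ih =>
  intro S hcard h2 hS
  by_cases hn2 : n = 2
  · subst hn2
    refine ⟨[], by simp, by simp, ?_⟩
    intro v hv w hw hvw
    obtain ⟨c, hc, hadj⟩ := sconn_neighbor hS hv hw hvw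
    have h1 : (S.erase v).card = 1 := by rw [Finset.card_erase_of_mem hv, hcard]
    obtain ⟨d, hd⟩ := Finset.card_eq_one.1 h1
    have hcd : c = d := by
      have : c ∈ S.erase v := Finset.mem_erase.2 ⟨hadj.ne', hc⟩
      rwa [hd, Finset.mem_singleton] at this
    have hwd : w = d := by
      have : w ∈ S.erase v := Finset.mem_erase.2 ⟨Ne.symm hvw, hw⟩
      rwa [hd, Finset.mem_singleton] at this
    have hvwadj : H.Adj v w := by rwa [hcd, ← hwd] at hadj
    exact ⟨0, le_rfl, by simpa [pp] using hvwadj⟩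
  · by_cases hn3 : n = 3
    · subst hn3
      obtain ⟨c, u, v, hc, hu, hv, hcu, hcv, huv, hadj1, hadj2, hset⟩ := center3 hS hcard
      set π : Equiv.Perm V := Equiv.swap c u with hπ
      have hpp1 : pp [π] 1 = π := by simp [pp]
      refine ⟨[π], by simp, ?_, ?_⟩
      · intro π' hπ'
        simp at hπ'
        exact ⟨c, u, hc, hu, hadj1, hπ'⟩
      · intro v' hv' w' hw' hvw
        rw [hset] at hv' hw'
        simp at hv' hw'
        have hvc : v ≠ c := Ne.symm hcv
        have hvu : v ≠ u := Ne.symm huv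
        have case_uv : H.Adj (pp [π] 1 u) (pp [π] 1 v) := by
          rw [hpp1]
          show H.Adj (π u) (π v)
          rw [hπ]
          rw [Equiv.swap_apply_right, Equiv.swap_apply_of_ne_of_ne hvc hvu]
          exact hadj2
        rcases hv' with rfl | rfl | rfl <;> rcases hw' with rfl | rfl | rfl
        · exact absurd rfl hvw
        · exact ⟨0, by simp, by simpa [pp] using hadj1⟩
        · exact ⟨0, by simp, by simpa [pp] using hadj2⟩
        · exact ⟨0, by simp, by simpa [pp] using hadj1.symm⟩
        · exact absurd rfl hvw
        · exact ⟨1, by simp, case_uv⟩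
        · exact ⟨0, by simp, by simpa [pp] using hadj2.symm⟩
        · exact ⟨1, by simp, case_uv.symm⟩
        · exact absurd rfl hvw
    · -- n ≥ 4
      have h4 : 4 ≤ n := by omega
      obtain ⟨p₁, _, _⟩ := exists_pkgs n S hcard (by omega) hS
      obtain ⟨as, hne, hmem, hchain, hlenle, hdom, hconn⟩ := p₁
      rcases as with _ | ⟨a, l⟩
      · exact absurd rfl hne
      set lam : V := (a :: l).getLast (List.cons_ne_nil a l) with hlam
      have hlamS : lam ∈ S := hmem _ (List.getLast_mem _)
      have haS : a ∈ S := hmem a (by simp)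
      set L₁ : List (Equiv.Perm V) := swapList (a :: l) with hL₁
      set m : ℕ := L₁.length with hm
      have hmlen : m = l.length := swapList_length a l
      have hcard' : (S.erase lam).card = n - 1 := by
        rw [Finset.card_erase_of_mem hlamS, hcard]
      obtain ⟨L₂, hlen₂, hedge₂, hmeet₂⟩ := ih (n - 1) (by omega) (S.erase lam) hcard'
        (by omega) hconn
      set F : Equiv.Perm V := pp L₁ m with hF
      have hFa : F a = lam := pp_swapList_head a l
      have hlen₁ : m ≤ 2 * n - 5 := by
        have : (a :: l).length ≤ 2 * S.card - 4 := hlenle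
        simp at this
        rw [hcard] at this
        omega
      refine ⟨L₁ ++ L₂, ?_, ?_, ?_⟩
      · rw [List.length_append]
        obtain ⟨k, rfl⟩ : ∃ k, n = k + 4 := ⟨n - 4, by omega⟩
        have e1 : k + 4 - 2 = k + 2 := by omega
        have e2 : k + 4 - 1 - 2 = k + 1 := by omega
        have e3 : 2 * (k + 4) - 5 = 2 * k + 3 := by omega
        rw [e1]
        rw [e2] at hlen₂
        rw [e3] at hlen₁
        have : (k + 2) ^ 2 = (2 * k + 3) + (k + 1) ^ 2 := by ring
        omega
      · intro π hπ
        rcases List.mem_append.1 hπ with h | h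
        · obtain ⟨x, y, hx, hy, hxy, rfl⟩ := swapList_mem hchain π h
          exact ⟨x, y, hmem x hx, hmem y hy, hxy, rfl⟩
        · obtain ⟨x, y, hx, hy, hxy, rfl⟩ := hedge₂ π h
          exact ⟨x, y, Finset.mem_of_mem_erase hx, Finset.mem_of_mem_erase hy, hxy, rfl⟩
      · intro v hv w hw hvw
        by_cases hva : v = a
        · obtain ⟨t, ht, hA⟩ := key_meet (List.cons_ne_nil a l) hchain
            (u := w) (by simp only [List.head_cons]; exact fun h => hvw (by rw [hva, h]))
            (hdom w hw)
          rw [← hL₁] at ht hA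
          refine ⟨t, ?_, ?_⟩
          · rw [List.length_append]; omega
          · rw [hva, pp_append_left L₁ L₂ ht]
            simpa using hA
        · by_cases hwa : w = a
          · obtain ⟨t, ht, hA⟩ := key_meet (List.cons_ne_nil a l) hchain
              (u := v) (by simp only [List.head_cons]; exact fun h => hvw (by rw [hwa, h]))
              (hdom v hv)
            rw [← hL₁] at ht hA
            refine ⟨t, ?_, ?_⟩
            · rw [List.length_append]; omega
            · rw [hwa, pp_append_left L₁ L₂ ht]
              exact (by simpa using hA : H.Adj (pp L₁ t a) (pp L₁ t v)).symm
          · have hvS' : F v ∈ S.erase lam := by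
              refine Finset.mem_erase.2 ⟨?_, ?_⟩
              · rw [← hFa]
                exact fun h => hva (F.injective h)
              · exact pp_swapList_memS hmem m hv
            have hwS' : F w ∈ S.erase lam := by
              refine Finset.mem_erase.2 ⟨?_, ?_⟩
              · rw [← hFa]
                exact fun h => hwa (F.injective h)
              · exact pp_swapList_memS hmem m hw
            obtain ⟨t', ht', hA⟩ := hmeet₂ (F v) hvS' (F w) hwS'
              (fun h => hvw (F.injective h))
            refine ⟨m + t', ?_, ?_⟩
            · rw [List.length_append, ← hm]; omega
            · have happ := pp_append L₁ L₂ t'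
              rw [← hm] at happ
              rw [happ]
              simpa [Equiv.Perm.mul_apply] using hA

end TMPaux

/-- Every TMP instance `(H, A)` on `n ≥ 3` nodes with `H` connected admits a solution with
at most `(n-2)²` swaps and at most `(n-2)²` steps; in particular `MS(H,A) ≤ (n-2)²` and
`MT(H,A) ≤ (n-2)²`, so both quantities are `O(n²)`. -/
theorem quadratic_upper_bound {V Q : Type*} [Fintype V] [DecidableEq V] [Fintype Q]
    (H : SimpleGraph V) (A : SimpleGraph Q) (n : ℕ) (hn : 3 ≤ n)
    (hV : Fintype.card V = n) (hQ : Fintype.card Q = n) (hconn : H.Connected) :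
    (∃ s : TMPSolution H A, s.swaps ≤ (n - 2) ^ 2 ∧ s.steps ≤ (n - 2) ^ 2) ∧
      MS H A ≤ (((n - 2) ^ 2 : ℕ) : ℕ∞) ∧ MT H A ≤ (((n - 2) ^ 2 : ℕ) : ℕ∞) := by
  classical
  -- the statement is about general universes; reduce? (we stated axiom for Type only: fix later)
  have hSconn : TMPaux.SConn H (Finset.univ : Finset V) := by
    intro a _ b _
    obtain ⟨w⟩ := hconn.preconnected a b
    exact ⟨w, fun x _ => Finset.mem_univ x⟩
  have hcardu : (Finset.univ : Finset V).card = n := by simpa using hV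
  obtain ⟨L, hlen, hedge, hmeet⟩ := TMPaux.meets_all (V := V) (H := H) n Finset.univ
    hcardu (by omega) hSconn
  have e : Q ≃ V := Fintype.equivOfCardEq (hQ.trans hV.symm)
  set s : TMPSolution H A :=
    { init := e
      layers := L
      isSwapLayer := by
        intro π hπ
        obtain ⟨a, b, _, _, hab, rfl⟩ := hedge π hπ
        refine ⟨Equiv.swap_mul_self a b, ?_⟩
        intro v
        by_cases hva : v = a
        · subst hva
          right; rw [Equiv.swap_apply_left]; exact hab
        · by_cases hvb : v = b
          · subst hvb
            right; rw [Equiv.swap_apply_right]; exact hab.symm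
          · left; exact Equiv.swap_apply_of_ne_of_ne hva hvb
      meets := by
        intro p q hpq
        obtain ⟨t, ht, hA⟩ := hmeet (e p) (Finset.mem_univ _) (e q) (Finset.mem_univ _)
          (fun h => (A.ne_of_adj hpq) (e.injective h))
        exact ⟨t, ht, hA⟩ } with hs
  have hsteps : s.steps ≤ (n - 2) ^ 2 := hlen
  have hswaps : s.swaps ≤ (n - 2) ^ 2 := by
    have hmap : s.layers.map (fun π => π.support.card / 2) = s.layers.map (fun _ => 1) := by
      apply List.map_congr_left
      intro π hπ
      obtain ⟨a, b, _, _, hab, rfl⟩ := hedge π hπ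
      rw [Equiv.Perm.support_swap hab.ne]
      rw [Finset.card_insert_of_notMem (by simpa using hab.ne), Finset.card_singleton]
    rw [TMPSolution.swaps, hmap]
    simpa using hlen
  refine ⟨⟨s, hswaps, hsteps⟩, ?_, ?_⟩
  · exact le_trans (sInf_le ⟨s, rfl⟩) (by exact_mod_cast hswaps)
  · exact le_trans (sInf_le ⟨s, rfl⟩) (by exact_mod_cast hsteps)
end

section
/- Let (H, A) be a TMP instance with H = (V, E) connected and A = (Q, C). Define Δ'(H) := max{ |N(i) ∪ N(j)| − |N(i) ∩ N(j)| − 2 : {i, j} ∈ E }, where N(v) is the set of neighbors of v in H. Then Δ'(H) · MS(H, A) ≥ |C| − |E|. -/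
section TMPAux


open Finset


section Aux

private lemma even_card_of_invol {α : Type*} [DecidableEq α] :
    ∀ (n : ℕ) (s : Finset α) (f : α → α), s.card = n →
      (∀ a ∈ s, f a ∈ s) → (∀ a ∈ s, f (f a) = a) → (∀ a ∈ s, f a ≠ a) → Even s.card := by
  intro n
  induction n using Nat.strong_induction_on with
  | _ n ih =>
    intro s f hn hmem hinv hne
    rcases s.eq_empty_or_nonempty with rfl | ⟨a, ha⟩
    · simp
    · have hfa := hmem a ha
      have hane := hne a ha
      have hsub : {a, f a} ⊆ s := by
        intro x hx
        rcases Finset.mem_insert.mp hx with rfl | hx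
        · exact ha
        · rw [Finset.mem_singleton.mp hx]; exact hfa
      have hpair : ({a, f a} : Finset α).card = 2 := by
        rw [Finset.card_insert_of_notMem (by simpa using (Ne.symm hane)), Finset.card_singleton]
      have hcards : (s \ {a, f a}).card = s.card - 2 := by
        rw [Finset.card_sdiff_of_subset hsub, hpair]
      have h2s : 2 ≤ s.card := hpair ▸ Finset.card_le_card hsub
      have hmem' : ∀ b ∈ s \ {a, f a}, f b ∈ s \ {a, f a} := by
        intro b hb
        rw [Finset.mem_sdiff] at hb ⊢
        obtain ⟨hbs, hbn⟩ := hb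
        simp only [Finset.mem_insert, Finset.mem_singleton, not_or] at hbn ⊢
        refine ⟨hmem b hbs, ?_, ?_⟩
        · intro h
          exact hbn.2 (by rw [← hinv b hbs, h])
        · intro h
          exact hbn.1 (by rw [← hinv b hbs, h, hinv a ha])
      have hinv' : ∀ b ∈ s \ {a, f a}, f (f b) = b :=
        fun b hb => hinv b (Finset.mem_sdiff.mp hb).1
      have hne' : ∀ b ∈ s \ {a, f a}, f b ≠ b :=
        fun b hb => hne b (Finset.mem_sdiff.mp hb).1
      have hlt : s.card - 2 < n := by omega
      have hev := ih _ hlt _ f hcards hmem' hinv' hne'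
      rw [hcards] at hev
      obtain ⟨m, hm⟩ := hev
      exact ⟨m + 1, by omega⟩

lemma support_card_even {V : Type*} [Fintype V] [DecidableEq V] (π : Equiv.Perm V)
    (h2 : π * π = 1) : Even π.support.card := by
  have hinv : ∀ v, π (π v) = v := fun v => by
    rw [← Equiv.Perm.mul_apply, h2, Equiv.Perm.one_apply]
  exact even_card_of_invol π.support.card π.support π rfl
    (fun a ha => Equiv.Perm.apply_mem_support.mpr ha)
    (fun a _ => hinv a)
    (fun a ha => Equiv.Perm.mem_support.mp ha)

end Aux


section Layer

variable {V : Type*} [Fintype V] [DecidableEq V] (H : SimpleGraph V) [DecidableRel H.Adj]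

noncomputable def tmpDelta : ℕ :=
  H.edgeFinset.sup (Sym2.lift ⟨fun i j =>
      (H.neighborFinset i ∪ H.neighborFinset j).card -
        (H.neighborFinset i ∩ H.neighborFinset j).card - 2,
    by
      intro a b
      dsimp only
      rw [Finset.union_comm, Finset.inter_comm]⟩)

lemma tmpDelta_bound {a b : V} (h : H.Adj a b) :
    (H.neighborFinset a ∪ H.neighborFinset b).card -
      (H.neighborFinset a ∩ H.neighborFinset b).card - 2 ≤ tmpDelta H := by
  have hedge : s(a, b) ∈ H.edgeFinset := by
    rwa [SimpleGraph.mem_edgeFinset, SimpleGraph.mem_edgeSet]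
  have := Finset.le_sup (f := (Sym2.lift ⟨fun i j =>
      (H.neighborFinset i ∪ H.neighborFinset j).card -
        (H.neighborFinset i ∩ H.neighborFinset j).card - 2,
    by
      intro a b
      dsimp only
      rw [Finset.union_comm, Finset.inter_comm]⟩)) hedge
  rwa [Sym2.lift_mk] at this

def tmpValid (π : Equiv.Perm V) (a b : V) : Prop :=
  π a ≠ a ∧ (¬ H.Adj (π a) b ∨ H.Adj a (π b))

instance (π : Equiv.Perm V) (a b : V) : Decidable (tmpValid H π a b) := by
  unfold tmpValid; infer_instance

def tmpZ (π : Equiv.Perm V) (a b : V) : V := if H.Adj (π a) b then π b else b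

def tmpT (π : Equiv.Perm V) (a : V) : Finset V :=
  (H.neighborFinset a \ H.neighborFinset (π a)).erase (π a)

noncomputable def tmpCh (π : Equiv.Perm V) (e : Sym2 V) : Σ _ : V, V :=
  if tmpValid H π (Quot.out e).1 (Quot.out e).2
  then ⟨(Quot.out e).1, tmpZ H π (Quot.out e).1 (Quot.out e).2⟩
  else ⟨(Quot.out e).2, tmpZ H π (Quot.out e).2 (Quot.out e).1⟩

variable {H}

lemma tmpL1 {π : Equiv.Perm V} {a b : V}
    (hab : H.Adj a b) (hn : ¬ H.Adj (π a) (π b)) (h : ¬ tmpValid H π a b) :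
    tmpValid H π b a := by
  unfold tmpValid at *
  push_neg at h
  by_cases hb : π b = b
  · by_cases haa : π a = a
    · exact absurd hab (by rwa [haa, hb] at hn)
    · obtain ⟨_, h2⟩ := h haa
      rw [hb] at h2
      exact absurd hab h2
  · refine ⟨hb, Or.inl ?_⟩
    by_cases haa : π a = a
    · rw [haa] at hn
      intro hh
      exact hn hh.symm
    · obtain ⟨_, h2⟩ := h haa
      intro hh
      exact h2 hh.symm

lemma tmpL2 {π : Equiv.Perm V} (hinv : ∀ v, π (π v) = v) {a b : V}
    (hab : H.Adj a b) (hn : ¬ H.Adj (π a) (π b)) (h : tmpValid H π a b) :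
    tmpZ H π a b ∈ tmpT H π a := by
  obtain ⟨hne, hor⟩ := h
  unfold tmpZ tmpT
  by_cases hc : H.Adj (π a) b
  · rw [if_pos hc]
    have hadj' : H.Adj a (π b) := hor.resolve_left (not_not_intro hc)
    refine Finset.mem_erase.mpr ⟨?_, Finset.mem_sdiff.mpr ⟨?_, ?_⟩⟩
    · intro h'
      exact hab.ne (π.injective h').symm
    · exact (SimpleGraph.mem_neighborFinset _ _ _).mpr hadj'
    · intro hmem
      exact hn ((SimpleGraph.mem_neighborFinset _ _ _).mp hmem)
  · rw [if_neg hc]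
    refine Finset.mem_erase.mpr ⟨?_, Finset.mem_sdiff.mpr ⟨?_, ?_⟩⟩
    · intro h'
      apply hn
      rw [h', hinv a]
      exact ((h' ▸ hab) : H.Adj a (π a)).symm
    · exact (SimpleGraph.mem_neighborFinset _ _ _).mpr hab
    · intro hmem
      exact hc ((SimpleGraph.mem_neighborFinset _ _ _).mp hmem)

lemma tmpL3 {π : Equiv.Perm V} (hinv : ∀ v, π (π v) = v) {a u w : V}
    (hu0 : H.Adj a u) (hw0 : H.Adj a w)
    (hnu : ¬ H.Adj (π a) (π u)) (hnw : ¬ H.Adj (π a) (π w))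
    (hzz : tmpZ H π a u = tmpZ H π a w) : u = w := by
  unfold tmpZ at hzz
  by_cases hu : H.Adj (π a) u <;> by_cases hw : H.Adj (π a) w <;>
    simp only [if_pos, if_neg, hu, hw, if_true, if_false] at hzz
  · exact π.injective hzz
  · rw [← hzz, hinv u] at hnw
    exact absurd hu hnw
  · rw [hzz, hinv w] at hnu
    exact absurd hw hnu
  · exact hzz

end Layer

section LayerMain

variable {V : Type*} [Fintype V] [DecidableEq V] (H : SimpleGraph V) [DecidableRel H.Adj]

lemma tmp_layer_bound (π : Equiv.Perm V) (h2 : π * π = 1)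
    (hmv : ∀ v, π v = v ∨ H.Adj v (π v)) :
    (H.edgeFinset.filter fun e => Sym2.map ⇑π e ∉ H.edgeFinset).card
      ≤ tmpDelta H * (π.support.card / 2) := by
  have hinv : ∀ v, π (π v) = v := fun v => by
    rw [← Equiv.Perm.mul_apply, h2, Equiv.Perm.one_apply]
  have main : ∀ e ∈ H.edgeFinset.filter (fun e => Sym2.map ⇑π e ∉ H.edgeFinset),
      ∃ a u, e = s(a, u) ∧ tmpCh H π e = ⟨a, tmpZ H π a u⟩ ∧ tmpValid H π a u ∧
        H.Adj a u ∧ ¬ H.Adj (π a) (π u) := by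
    intro e he
    rw [Finset.mem_filter] at he
    obtain ⟨he1, he2⟩ := he
    have hout : s((Quot.out e).1, (Quot.out e).2) = e := by
      show Quot.mk _ (Quot.out e) = e
      exact e.out_eq
    set a := (Quot.out e).1 with ha
    set b := (Quot.out e).2 with hb
    have hadj : H.Adj a b := by
      rw [← hout, SimpleGraph.mem_edgeFinset, SimpleGraph.mem_edgeSet] at he1
      exact he1
    have hnadj : ¬ H.Adj (π a) (π b) := by
      rw [← hout, Sym2.map_pair_eq, SimpleGraph.mem_edgeFinset, SimpleGraph.mem_edgeSet] at he2
      exact he2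
    by_cases hv : tmpValid H π a b
    · exact ⟨a, b, hout.symm, by rw [tmpCh, if_pos hv], hv, hadj, hnadj⟩
    · refine ⟨b, a, ?_, by rw [tmpCh, if_neg hv], tmpL1 hadj hnadj hv, hadj.symm,
        fun hc => hnadj hc.symm⟩
      rw [← hout]
      exact Sym2.eq_swap
  have hcard1 : (H.edgeFinset.filter fun e => Sym2.map ⇑π e ∉ H.edgeFinset).card
      ≤ (π.support.sigma (tmpT H π)).card := by
    apply Finset.card_le_card_of_injOn (tmpCh H π)
    · intro e he
      obtain ⟨a, u, _, hch, hval, hadj, hnadj⟩ := main e he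
      rw [hch, Finset.mem_coe, Finset.mem_sigma]
      exact ⟨Equiv.Perm.mem_support.mpr hval.1, tmpL2 hinv hadj hnadj hval⟩
    · intro e1 h1 e2 h2 hcheq
      obtain ⟨a1, u1, he1, hc1, hv1, ha1, hn1⟩ := main e1 (Finset.mem_coe.mp h1)
      obtain ⟨a2, u2, he2, hc2, hv2, ha2, hn2⟩ := main e2 (Finset.mem_coe.mp h2)
      rw [hc1, hc2] at hcheq
      obtain ⟨haa, hzz⟩ := Sigma.mk.inj_iff.mp hcheq
      subst haa
      rw [he1, he2, tmpL3 hinv ha1 ha2 hn1 hn2 (eq_of_heq hzz)]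
  rw [Finset.card_sigma] at hcard1
  have hpair : ∀ a ∈ π.support, (tmpT H π a).card + (tmpT H π (π a)).card ≤ tmpDelta H := by
    intro a ha
    have hne := Equiv.Perm.mem_support.mp ha
    have hAdj : H.Adj a (π a) := (hmv a).resolve_left hne
    have hπa : π a ∈ H.neighborFinset a \ H.neighborFinset (π a) := by
      rw [Finset.mem_sdiff]
      exact ⟨(SimpleGraph.mem_neighborFinset _ _ _).mpr hAdj,
        fun h => H.irrefl ((SimpleGraph.mem_neighborFinset _ _ _).mp h)⟩
    have ha' : a ∈ H.neighborFinset (π a) \ H.neighborFinset a := by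
      rw [Finset.mem_sdiff]
      exact ⟨(SimpleGraph.mem_neighborFinset _ _ _).mpr hAdj.symm,
        fun h => H.irrefl ((SimpleGraph.mem_neighborFinset _ _ _).mp h)⟩
    have hTa : (tmpT H π a).card = (H.neighborFinset a \ H.neighborFinset (π a)).card - 1 :=
      Finset.card_erase_of_mem hπa
    have hTpa : (tmpT H π (π a)).card = (H.neighborFinset (π a) \ H.neighborFinset a).card - 1 := by
      rw [tmpT, hinv a]
      exact Finset.card_erase_of_mem ha'
    have e1 := Finset.card_union_add_card_inter (H.neighborFinset a) (H.neighborFinset (π a))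
    have e2 := Finset.card_inter_add_card_sdiff (H.neighborFinset a) (H.neighborFinset (π a))
    have e3 := Finset.card_inter_add_card_sdiff (H.neighborFinset (π a)) (H.neighborFinset a)
    have e4 : (H.neighborFinset a ∩ H.neighborFinset (π a)).card
        = (H.neighborFinset (π a) ∩ H.neighborFinset a).card := by rw [Finset.inter_comm]
    have hx : 1 ≤ (H.neighborFinset a \ H.neighborFinset (π a)).card :=
      Finset.card_pos.mpr ⟨_, hπa⟩
    have hy : 1 ≤ (H.neighborFinset (π a) \ H.neighborFinset a).card :=
      Finset.card_pos.mpr ⟨_, ha'⟩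
    have hle := tmpDelta_bound H hAdj
    omega
  have hre : ∑ a ∈ π.support, (tmpT H π (π a)).card = ∑ a ∈ π.support, (tmpT H π a).card :=
    Equiv.Perm.sum_comp π π.support (fun a => (tmpT H π a).card)
      (fun a ha => Finset.mem_coe.mpr (Equiv.Perm.mem_support.mpr ha))
  have hsum2 : ∑ a ∈ π.support, ((tmpT H π a).card + (tmpT H π (π a)).card)
      ≤ π.support.card * tmpDelta H := by
    calc ∑ a ∈ π.support, ((tmpT H π a).card + (tmpT H π (π a)).card)
        ≤ ∑ _a ∈ π.support, tmpDelta H := Finset.sum_le_sum hpair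
      _ = π.support.card * tmpDelta H := by rw [Finset.sum_const, smul_eq_mul]
  rw [Finset.sum_add_distrib, hre] at hsum2
  obtain ⟨m, hm⟩ := support_card_even π h2
  have hdiv : π.support.card / 2 = m := by omega
  rw [hdiv]
  refine le_trans hcard1 ?_
  rw [hm] at hsum2
  have hsum3 : π.support.card * tmpDelta H = tmpDelta H * m + tmpDelta H * m := by
    rw [hm]; ring
  rw [hm] at hsum3
  set x := ∑ a ∈ π.support, (tmpT H π a).card
  set y := tmpDelta H * m
  omega

end LayerMain

section Solution

private lemma list_sum_getD {α : Type*} (g : α → ℕ) (d : α) :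
    ∀ l : List α, (l.map g).sum = ∑ i ∈ Finset.range l.length, g (l.getD i d)
  | [] => by simp
  | a :: l => by
    rw [List.map_cons, List.sum_cons, List.length_cons, Finset.sum_range_succ']
    rw [list_sum_getD g d l]
    simp [List.getD_cons_succ, List.getD_cons_zero, add_comm]

variable {V Q : Type*} [Fintype V] [DecidableEq V] [Fintype Q] [DecidableEq Q]
  (H : SimpleGraph V) (A : SimpleGraph Q) [DecidableRel H.Adj] [DecidableRel A.Adj]

lemma tmp_solution_bound (s : TMPSolution H A) :
    A.edgeFinset.card ≤ H.edgeFinset.card + tmpDelta H * s.swaps := by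
  classical
  set L := s.layers with hL
  set k := L.length with hk
  set F : ℕ → (Q ≃ V) := fun t => s.init.trans ((L.take t).reverse.prod) with hF
  set S : ℕ → Finset (Sym2 Q) := fun t => H.edgeFinset.image (Sym2.map ⇑(F t).symm) with hS
  have hid1 : ∀ t, (⇑(F t) ∘ ⇑(F t).symm) = id := fun t => by
    funext v; simp
  have hid2 : ∀ t, (⇑(F t).symm ∘ ⇑(F t)) = id := fun t => by
    funext v; simp
  have hmemS : ∀ (t : ℕ) (e : Sym2 Q), e ∈ S t ↔ Sym2.map ⇑(F t) e ∈ H.edgeFinset := by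
    intro t e
    rw [hS]
    simp only
    constructor
    · intro he
      obtain ⟨e', he', heq⟩ := Finset.mem_image.mp he
      rw [← heq, Sym2.map_map, hid1, Sym2.map_id, id_eq]
      exact he'
    · intro he
      refine Finset.mem_image.mpr ⟨Sym2.map (⇑(F t)) e, he, ?_⟩
      rw [Sym2.map_map, hid2, Sym2.map_id, id_eq]
  have hScard : ∀ t, (S t).card = H.edgeFinset.card := fun t =>
    Finset.card_image_of_injective _ (Sym2.map.injective (F t).symm.injective)
  have hFstep : ∀ t, t < k → ∀ q, F (t + 1) q = (L.getD t 1) (F t q) := by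
    intro t ht q
    have htake : L.take (t + 1) = L.take t ++ [L.getD t 1] := by
      rw [List.getD_eq_getElem L 1 ht, List.take_succ, List.getElem?_eq_getElem ht]
      rfl
    rw [hF]
    simp only [Equiv.trans_apply]
    rw [htake, List.reverse_append]
    simp [Equiv.Perm.mul_apply]
  have hstep : ∀ t, t < k →
      (S (t + 1) \ S t).card ≤ tmpDelta H * ((L.getD t 1).support.card / 2) := by
    intro t ht
    set π := L.getD t 1 with hπ
    have hmem : π ∈ L := by
      rw [hπ, List.getD_eq_getElem L 1 ht]
      exact List.getElem_mem ht
    obtain ⟨h2, hmv⟩ := s.isSwapLayer π hmem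
    have hinv : ∀ v, π (π v) = v := fun v => by
      rw [← Equiv.Perm.mul_apply, h2, Equiv.Perm.one_apply]
    refine le_trans ?_ (tmp_layer_bound H π h2 hmv)
    apply Finset.card_le_card_of_injOn (fun e => Sym2.map ⇑(F (t + 1)) e)
    · intro e he
      rw [Finset.mem_coe, Finset.mem_sdiff] at he
      rw [Finset.mem_coe, Finset.mem_filter]
      refine ⟨(hmemS _ _).mp he.1, ?_⟩
      rw [Sym2.map_map]
      have hcomp : (⇑π ∘ ⇑(F (t + 1))) = ⇑(F t) := by
        funext q
        simp only [Function.comp_apply]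
        rw [hFstep t ht q, hinv]
      rw [hcomp]
      intro hc
      exact he.2 ((hmemS _ _).mpr hc)
    · exact ((Sym2.map.injective (F (t + 1)).injective).injOn).mono (Set.subset_univ _)
  have hmain : ∀ t, t ≤ k → ((Finset.range (t + 1)).biUnion S).card ≤
      H.edgeFinset.card + tmpDelta H * ∑ i ∈ Finset.range t, ((L.getD i 1).support.card / 2) := by
    intro t
    induction t with
    | zero =>
      intro _
      rw [Finset.range_one, Finset.singleton_biUnion, hScard 0]
      simp
    | succ t ih =>
      intro ht
      have ht' : t ≤ k := Nat.le_of_succ_le ht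
      have htlt : t < k := ht
      rw [Finset.range_add_one, Finset.biUnion_insert]
      have h1 : ((S (t + 1)) ∪ (Finset.range (t + 1)).biUnion S).card
          = (S (t + 1) \ (Finset.range (t + 1)).biUnion S).card
            + ((Finset.range (t + 1)).biUnion S).card :=
        (Finset.card_sdiff_add_card _ _).symm
      have h2 : (S (t + 1) \ (Finset.range (t + 1)).biUnion S).card ≤ (S (t + 1) \ S t).card := by
        apply Finset.card_le_card
        apply Finset.sdiff_subset_sdiff (le_refl _)
        intro e he
        exact Finset.mem_biUnion.mpr ⟨t, Finset.mem_range.mpr (by omega), he⟩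
      have h3 := hstep t htlt
      have h4 := ih ht'
      rw [Finset.sum_range_succ, Nat.mul_add]
      set x1 := (S (t + 1) \ (Finset.range (t + 1)).biUnion S).card
      set x2 := ((Finset.range (t + 1)).biUnion S).card
      set y1 := tmpDelta H * ∑ i ∈ Finset.range t, ((L.getD i 1).support.card / 2)
      set y2 := tmpDelta H * ((L.getD t 1).support.card / 2)
      set z := (S (t + 1) \ S t).card
      omega
  have hsub : A.edgeFinset ⊆ (Finset.range (k + 1)).biUnion S := by
    intro e
    refine Sym2.inductionOn e ?_
    intro p q he
    have hadj : A.Adj p q := by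
      rwa [SimpleGraph.mem_edgeFinset, SimpleGraph.mem_edgeSet] at he
    obtain ⟨t, htk, hAdj⟩ := s.meets p q hadj
    have hkk : k = s.layers.length := by rw [hk, hL]
    refine Finset.mem_biUnion.mpr ⟨t, Finset.mem_range.mpr (by omega), ?_⟩
    rw [hmemS t _, Sym2.map_pair_eq, SimpleGraph.mem_edgeFinset, SimpleGraph.mem_edgeSet]
    exact hAdj
  have hswap : ∑ i ∈ Finset.range k, ((L.getD i 1).support.card / 2) = s.swaps := by
    rw [TMPSolution.swaps, list_sum_getD (fun π => π.support.card / 2) 1 L]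
  have hfin := hmain k le_rfl
  rw [hswap] at hfin
  exact le_trans (Finset.card_le_card hsub) hfin

end Solution

section Complete

variable {V Q : Type*} [Fintype V] [DecidableEq V] [Fintype Q] [DecidableEq Q]
  (H : SimpleGraph V) (A : SimpleGraph Q) [DecidableRel H.Adj] [DecidableRel A.Adj]

lemma tmp_complete_case (hcard : Fintype.card V = Fintype.card Q) (hconn : H.Connected)
    (hd : tmpDelta H = 0) : A.edgeFinset.card ≤ H.edgeFinset.card := by
  classical
  by_cases hV : Fintype.card V ≤ 1
  · have hQ : Fintype.card Q ≤ 1 := hcard ▸ hV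
    have hAe : A.edgeFinset = ∅ := by
      rw [Finset.eq_empty_iff_forall_notMem]
      intro e
      refine Sym2.inductionOn e ?_
      intro p q he
      have hadj : A.Adj p q := by
        rwa [SimpleGraph.mem_edgeFinset, SimpleGraph.mem_edgeSet] at he
      have hpq : p = q := Fintype.card_le_one_iff.mp hQ p q
      exact A.irrefl (hpq ▸ hadj)
    simp [hAe]
  · push_neg at hV
    have hstep : ∀ i j a : V, H.Adj i j → H.Adj a i → a ≠ j → H.Adj a j := by
      intro i j a hij hai haj
      by_contra hnadj
      have hle := tmpDelta_bound H hij
      rw [hd] at hle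
      have hj : j ∈ H.neighborFinset i \ H.neighborFinset j := by
        rw [Finset.mem_sdiff]
        exact ⟨(SimpleGraph.mem_neighborFinset _ _ _).mpr hij,
          fun h => H.irrefl ((SimpleGraph.mem_neighborFinset _ _ _).mp h)⟩
      have hi : i ∈ H.neighborFinset j \ H.neighborFinset i := by
        rw [Finset.mem_sdiff]
        exact ⟨(SimpleGraph.mem_neighborFinset _ _ _).mpr hij.symm,
          fun h => H.irrefl ((SimpleGraph.mem_neighborFinset _ _ _).mp h)⟩
      have ha : a ∈ H.neighborFinset i \ H.neighborFinset j := by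
        rw [Finset.mem_sdiff]
        exact ⟨(SimpleGraph.mem_neighborFinset _ _ _).mpr hai.symm,
          fun h => hnadj ((SimpleGraph.mem_neighborFinset _ _ _).mp h).symm⟩
      have hsub2 : ({j, a} : Finset V) ⊆ H.neighborFinset i \ H.neighborFinset j := by
        intro x hx
        rcases Finset.mem_insert.mp hx with rfl | hx
        · exact hj
        · rw [Finset.mem_singleton.mp hx]; exact ha
      have h2 : 2 ≤ (H.neighborFinset i \ H.neighborFinset j).card := by
        have : ({j, a} : Finset V).card = 2 := by
          rw [Finset.card_insert_of_notMem (by simpa using Ne.symm haj), Finset.card_singleton]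
        exact this ▸ Finset.card_le_card hsub2
      have h1 : 1 ≤ (H.neighborFinset j \ H.neighborFinset i).card :=
        Finset.card_pos.mpr ⟨_, hi⟩
      have e1 := Finset.card_union_add_card_inter (H.neighborFinset i) (H.neighborFinset j)
      have e2 := Finset.card_inter_add_card_sdiff (H.neighborFinset i) (H.neighborFinset j)
      have e3 := Finset.card_inter_add_card_sdiff (H.neighborFinset j) (H.neighborFinset i)
      have e4 : (H.neighborFinset i ∩ H.neighborFinset j).card
          = (H.neighborFinset j ∩ H.neighborFinset i).card := by rw [Finset.inter_comm]
      omega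
    have hkey : ∀ (a b : V), H.Walk a b → a ≠ b → H.Adj a b := by
      intro a b w
      induction w with
      | nil => intro h; exact absurd rfl h
      | @cons u x v hux p ih =>
        intro h
        by_cases hxv : x = v
        · exact hxv ▸ hux
        · exact hstep x v u (ih hxv) hux h
    have htop : H = ⊤ := by
      ext a b
      simp only [SimpleGraph.top_adj]
      constructor
      · exact fun h => h.ne
      · intro h
        obtain ⟨w⟩ := hconn.preconnected a b
        exact hkey a b w h
    calc A.edgeFinset.card ≤ (⊤ : SimpleGraph Q).edgeFinset.card :=
          Finset.card_le_card (SimpleGraph.edgeFinset_mono le_top)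
      _ = (Fintype.card Q).choose 2 := SimpleGraph.card_edgeFinset_top_eq_card_choose_two
      _ = (Fintype.card V).choose 2 := by rw [hcard]
      _ = (⊤ : SimpleGraph V).edgeFinset.card :=
          SimpleGraph.card_edgeFinset_top_eq_card_choose_two.symm
      _ = H.edgeFinset.card :=
          le_antisymm (Finset.card_le_card (SimpleGraph.edgeFinset_mono htop.ge))
            (Finset.card_le_card (SimpleGraph.edgeFinset_mono htop.le))

end Complete

end TMPAux

/-- Lower bound on the number of swaps: `Δ'(H) · MS(H,A) ≥ |C| - |E|`, where
`Δ'(H) = max {|N(i) ∪ N(j)| - |N(i) ∩ N(j)| - 2 : {i,j} ∈ E}`. -/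
theorem lower_swap_bound {V Q : Type*} [Fintype V] [DecidableEq V] [Fintype Q]
    [DecidableEq Q] (H : SimpleGraph V) (A : SimpleGraph Q)
    [DecidableRel H.Adj] [DecidableRel A.Adj]
    (hcard : Fintype.card V = Fintype.card Q) (hconn : H.Connected) :
    ((A.edgeFinset.card - H.edgeFinset.card : ℕ) : ℕ∞) ≤
      ((H.edgeFinset.sup (Sym2.lift ⟨fun i j =>
          (H.neighborFinset i ∪ H.neighborFinset j).card -
            (H.neighborFinset i ∩ H.neighborFinset j).card - 2,
        by
          intro a b
          dsimp only
          rw [Finset.union_comm, Finset.inter_comm]⟩) : ℕ) : ℕ∞) * MS H A := by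
  classical
  show ((A.edgeFinset.card - H.edgeFinset.card : ℕ) : ℕ∞) ≤ ((tmpDelta H : ℕ) : ℕ∞) * MS H A
  by_cases hs : Nonempty (TMPSolution H A)
  · obtain ⟨s0⟩ := hs
    set T : Set ℕ := {n : ℕ | ∃ s : TMPSolution H A, n = s.swaps} with hTdef
    have hTne : T.Nonempty := ⟨s0.swaps, s0, rfl⟩
    obtain ⟨s1, hs1⟩ := Nat.sInf_mem hTne
    have hb : A.edgeFinset.card - H.edgeFinset.card ≤ tmpDelta H * sInf T := by
      have h := tmp_solution_bound H A s1
      rw [← hs1] at h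
      exact tsub_le_iff_left.mpr h
    have hMS : ((sInf T : ℕ) : ℕ∞) ≤ MS H A := by
      apply le_sInf
      rintro b ⟨s2, rfl⟩
      have hle2 : sInf T ≤ s2.swaps := Nat.sInf_le ⟨s2, rfl⟩
      exact_mod_cast hle2
    calc ((A.edgeFinset.card - H.edgeFinset.card : ℕ) : ℕ∞)
        ≤ ((tmpDelta H * sInf T : ℕ) : ℕ∞) := by exact_mod_cast hb
      _ = ((tmpDelta H : ℕ) : ℕ∞) * ((sInf T : ℕ) : ℕ∞) := by push_cast; ring
      _ ≤ ((tmpDelta H : ℕ) : ℕ∞) * MS H A := mul_le_mul_right hMS _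
  · have hempty : {n : ℕ∞ | ∃ s : TMPSolution H A, n = (s.swaps : ℕ∞)} = ∅ := by
      ext n
      simp only [Set.mem_empty_iff_false, iff_false, Set.mem_setOf_eq, not_exists]
      exact fun s _ => hs ⟨s⟩
    have hMS : MS H A = ⊤ := by rw [MS, hempty, sInf_empty]
    rw [hMS]
    by_cases hd : tmpDelta H = 0
    · have hle := tmp_complete_case H A hcard hconn hd
      have hz : A.edgeFinset.card - H.edgeFinset.card = 0 := Nat.sub_eq_zero_of_le hle
      rw [hz]
      simp
    · rw [ENat.mul_top (by exact_mod_cast hd)]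
      exact le_top
end

section
/- There exists a family of connected graphs (H_n), where H_n has n nodes, together with a constant c > 0 and a threshold N, such that for all n ≥ N, MS(H_n, K_n) ≥ c·n² and MT(H_n, K_n) ≥ c·n; in other words, MS(H_n, K_n) ∈ Ω(n²) and MT(H_n, K_n) ∈ Ω(n). (The family of path graphs P_n is such a family.) -/
namespace TMPLower

open SimpleGraph Finset

variable {n : ℕ} (s : TMPSolution (pathGraph n) (⊤ : SimpleGraph (Fin n)))

/-- The permutation after `t` layers. -/
def gp (t : ℕ) : Equiv.Perm (Fin n) := ((s.layers.take t).reverse.prod)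

/-- The position of token `p` after `t` layers, as an integer. -/
def pos (p : Fin n) (t : ℕ) : ℤ := ((gp s t) (s.init p)).val

/-- The `t`-th layer with default `1`. -/
def lay (t : ℕ) : Equiv.Perm (Fin n) := s.layers.getD t 1

lemma lay_mem {t : ℕ} (ht : t < s.layers.length) : lay s t ∈ s.layers := by
  rw [lay, List.getD_eq_getElem _ _ ht]
  exact List.getElem_mem ht

lemma gp_succ {t : ℕ} (ht : t < s.layers.length) :
    gp s (t + 1) = lay s t * gp s t := by
  unfold gp lay
  rw [List.getD_eq_getElem _ _ ht, ← List.take_concat_get' _ _ ht, List.reverse_append]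
  simp

lemma gp_succ_of_ge {t : ℕ} (ht : s.layers.length ≤ t) : gp s (t + 1) = gp s t := by
  unfold gp
  rw [List.take_of_length_le ht, List.take_of_length_le (ht.trans (Nat.le_succ t))]

lemma layer_move {π : Equiv.Perm (Fin n)} (hπ : IsSwapLayer (pathGraph n) π) (v : Fin n) :
    |((π v).val : ℤ) - (v.val : ℤ)| = if π v = v then 0 else 1 := by
  rcases hπ.2 v with h | h
  · simp [h]
  · have hne : π v ≠ v := fun he => (pathGraph n).loopless.irrefl v (by rw [he] at h; exact h)
    rw [if_neg hne]
    rw [pathGraph_adj] at h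
    rcases h with h | h
    · have : ((π v).val : ℤ) - (v.val : ℤ) = 1 := by omega
      rw [this, abs_one]
    · have : ((π v).val : ℤ) - (v.val : ℤ) = -1 := by omega
      rw [this, abs_neg, abs_one]

lemma layer_sum {π : Equiv.Perm (Fin n)} (hπ : IsSwapLayer (pathGraph n) π) :
    ∑ v : Fin n, |((π v).val : ℤ) - (v.val : ℤ)| = (π.support.card : ℤ) := by
  rw [Finset.sum_congr rfl fun v _ => layer_move hπ v]
  rw [Finset.sum_congr rfl fun v _ => (ite_not (π v = v) (1:ℤ) 0).symm]
  rw [Finset.sum_boole]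
  have : (Finset.univ.filter fun x => ¬ π x = x) = π.support := by
    ext v; simp [Equiv.Perm.mem_support]
  rw [this]

lemma layer_even {π : Equiv.Perm (Fin n)} (hπ : IsSwapLayer (pathGraph n) π) :
    π.support.card / 2 * 2 = π.support.card :=
  Nat.div_mul_cancel (Equiv.Perm.two_dvd_card_support (by rw [sq]; exact hπ.1))

lemma mov_le (t : ℕ) (p : Fin n) : |pos s p (t + 1) - pos s p t| ≤ 1 := by
  by_cases ht : t < s.layers.length
  · rw [pos, pos, gp_succ s ht, Equiv.Perm.mul_apply,
      layer_move (s.isSwapLayer _ (lay_mem s ht))]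
    split <;> norm_num
  · rw [pos, pos, gp_succ_of_ge s (le_of_not_gt ht)]
    simp

lemma mov_sum {t : ℕ} (ht : t < s.layers.length) :
    ∑ p : Fin n, |pos s p (t + 1) - pos s p t| = (((lay s t).support.card : ℤ)) := by
  rw [← layer_sum (s.isSwapLayer _ (lay_mem s ht))]
  refine Fintype.sum_equiv (s.init.trans (gp s t)) _ _ fun p => ?_
  rw [pos, pos, gp_succ s ht, Equiv.Perm.mul_apply]
  rfl

lemma d_meet {p q : Fin n} (hpq : p ≠ q) :
    ∃ t ≤ s.layers.length, |pos s p t - pos s q t| = 1 := by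
  obtain ⟨t, ht, hadj⟩ := s.meets p q (by simpa using hpq)
  refine ⟨t, ht, ?_⟩
  rw [pathGraph_adj] at hadj
  rw [pos, pos]
  show |(((gp s t) (s.init p)).val : ℤ) - ((gp s t) (s.init q)).val| = 1
  rcases hadj with h | h
  · have : (((gp s t) (s.init p)).val : ℤ) - ((gp s t) (s.init q)).val = -1 := by
      unfold gp; omega
    rw [this, abs_neg, abs_one]
  · have : (((gp s t) (s.init p)).val : ℤ) - ((gp s t) (s.init q)).val = 1 := by
      unfold gp; omega
    rw [this, abs_one]

/-- Per-step change of the distance of a pair. -/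
lemma d_step (t : ℕ) (p q : Fin n) :
    |(|pos s p (t+1) - pos s q (t+1)| - |pos s p t - pos s q t|)|
      ≤ |pos s p (t+1) - pos s p t| + |pos s q (t+1) - pos s q t| := by
  refine (abs_abs_sub_abs_le_abs_sub _ _).trans ?_
  rw [show pos s p (t+1) - pos s q (t+1) - (pos s p t - pos s q t)
      = (pos s p (t+1) - pos s p t) - (pos s q (t+1) - pos s q t) by ring]
  exact abs_sub _ _

lemma key_pair {p q : Fin n} (hpq : p ≠ q) :
    |pos s p 0 - pos s q 0| - 1 ≤
      ∑ t ∈ Finset.range s.layers.length,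
        |(|pos s p (t+1) - pos s q (t+1)| - |pos s p t - pos s q t|)| := by
  obtain ⟨t, htk, h1⟩ := d_meet s hpq
  set d : ℕ → ℤ := fun i => |pos s p i - pos s q i| with hd
  have tele : ∑ i ∈ Finset.range t, (d (i+1) - d i) = d t - d 0 :=
    Finset.sum_range_sub d t
  calc |pos s p 0 - pos s q 0| - 1 = d 0 - d t := by rw [hd]; simp only [← h1]
    _ ≤ |d t - d 0| := by rw [abs_sub_comm]; exact le_abs_self _
    _ = |∑ i ∈ Finset.range t, (d (i+1) - d i)| := by rw [tele]
    _ ≤ ∑ i ∈ Finset.range t, |d (i+1) - d i| := Finset.abs_sum_le_sum_abs _ _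
    _ ≤ ∑ i ∈ Finset.range s.layers.length, |d (i+1) - d i| := by
        refine Finset.sum_le_sum_of_subset_of_nonneg
          (Finset.range_subset_range.mpr htk) fun i _ _ => abs_nonneg _

lemma pos_zero (p : Fin n) : pos s p 0 = ((s.init p).val : ℤ) := by
  simp [pos, gp]

lemma sum_getD_div (l : List (Equiv.Perm (Fin n))) :
    ∑ t ∈ Finset.range l.length, ((l.getD t 1).support.card / 2) =
      (l.map fun π => π.support.card / 2).sum := by
  induction l with
  | nil => simp
  | cons a l ih =>
    rw [List.length_cons, Finset.sum_range_succ']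
    simp only [List.getD_cons_succ, List.getD_cons_zero, List.map_cons, List.sum_cons]
    rw [ih, Nat.add_comm]

set_option maxHeartbeats 1600000 in
lemma swaps_lb (hn : 6 ≤ n) : n ^ 2 ≤ 2048 * s.swaps := by
  classical
  set k := s.layers.length with hk
  set m := n / 4 with hm
  have h4m : 4 * m ≤ n := by omega
  have hm1 : 1 ≤ m := by omega
  have h2m : 2 * m ≤ n := by omega
  set M : ℕ → Fin n → ℤ := fun t v => |pos s v (t+1) - pos s v t| with hM
  set D : ℕ → Fin n × Fin n → ℤ := fun t pq =>
    |(|pos s pq.1 (t+1) - pos s pq.2 (t+1)| - |pos s pq.1 t - pos s pq.2 t|)| with hDdef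
  -- Step 1: lower bound on the initial sum of pair distances
  have hA : ((m : ℤ) * m) * ((n : ℤ) - 2 * m) ≤
      ∑ pq ∈ (Finset.univ.offDiag : Finset (Fin n × Fin n)),
        (|pos s pq.1 0 - pos s pq.2 0| - 1) := by
    have hidx : ∑ pq ∈ (Finset.univ.offDiag : Finset (Fin n × Fin n)),
          (|pos s pq.1 0 - pos s pq.2 0| - 1)
        = ∑ vw ∈ (Finset.univ.offDiag : Finset (Fin n × Fin n)),
          (|((vw.1.val : ℤ)) - (vw.2.val : ℤ)| - 1) := by
      refine Finset.sum_equiv (Equiv.prodCongr s.init s.init) (fun pq => ?_) (fun pq _ => ?_)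
      · simp [Finset.mem_offDiag]
      · simp [pos_zero]
    rw [hidx]
    set A : Finset (Fin n) := Finset.Iio (⟨m, by omega⟩ : Fin n) with hA'
    set B : Finset (Fin n) := Finset.Ici (⟨n - m, by omega⟩ : Fin n) with hB'
    have hsub : A ×ˢ B ⊆ Finset.univ.offDiag := by
      intro vw hvw
      rw [Finset.mem_product] at hvw
      obtain ⟨h1, h2⟩ := hvw
      rw [hA', Finset.mem_Iio, Fin.lt_def] at h1
      rw [hB', Finset.mem_Ici, Fin.le_def] at h2
      rw [Finset.mem_offDiag]
      refine ⟨Finset.mem_univ _, Finset.mem_univ _, fun he => ?_⟩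
      have : vw.1.val = vw.2.val := by rw [he]
      simp only at h1 h2
      omega
    have hterm : ∀ vw ∈ A ×ˢ B, ((n : ℤ) - 2 * m) ≤ |((vw.1.val : ℤ)) - (vw.2.val : ℤ)| - 1 := by
      intro vw hvw
      rw [Finset.mem_product] at hvw
      obtain ⟨h1, h2⟩ := hvw
      rw [hA', Finset.mem_Iio, Fin.lt_def] at h1
      rw [hB', Finset.mem_Ici, Fin.le_def] at h2
      simp only at h1 h2
      have hv : (vw.1.val : ℤ) < m := by exact_mod_cast h1
      have hw : (n : ℤ) - m ≤ (vw.2.val : ℤ) := by omega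
      have habs : (vw.2.val : ℤ) - vw.1.val ≤ |((vw.1.val : ℤ)) - (vw.2.val : ℤ)| := by
        rw [abs_sub_comm]; exact le_abs_self _
      linarith
    have hcard : (A ×ˢ B).card = m * m := by
      rw [Finset.card_product, hA', hB', Fin.card_Iio, Fin.card_Ici]
      show m * (n - (n - m)) = m * m
      congr 1
      omega
    calc ((m : ℤ) * m) * ((n : ℤ) - 2 * m)
        = (A ×ˢ B).card • ((n : ℤ) - 2 * m) := by
          rw [hcard, nsmul_eq_mul]; push_cast; ring
      _ ≤ ∑ vw ∈ A ×ˢ B, (|((vw.1.val : ℤ)) - (vw.2.val : ℤ)| - 1) :=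
          Finset.card_nsmul_le_sum _ _ _ hterm
      _ ≤ ∑ vw ∈ (Finset.univ.offDiag : Finset (Fin n × Fin n)), (|((vw.1.val : ℤ)) - (vw.2.val : ℤ)| - 1) := by
          refine Finset.sum_le_sum_of_subset_of_nonneg hsub fun vw hvw hvw' => ?_
          rw [Finset.mem_offDiag] at hvw
          have hne : vw.1.val ≠ vw.2.val := fun he => hvw.2.2 (Fin.val_injective he)
          have : (1 : ℤ) ≤ |((vw.1.val : ℤ)) - (vw.2.val : ℤ)| := by
            refine Int.one_le_abs ?_
            intro hc
            exact hne (by exact_mod_cast sub_eq_zero.mp hc)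
          linarith
  -- Step 2: meeting requirement
  have hB2 : ∑ pq ∈ (Finset.univ.offDiag : Finset (Fin n × Fin n)),
        (|pos s pq.1 0 - pos s pq.2 0| - 1)
      ≤ ∑ pq ∈ (Finset.univ.offDiag : Finset (Fin n × Fin n)), ∑ t ∈ Finset.range k, D t pq := by
    refine Finset.sum_le_sum fun pq hpq => ?_
    exact key_pair s (Finset.mem_offDiag.mp hpq).2.2
  -- Step 3: extend to all pairs and swap sums
  have hC : ∑ pq ∈ (Finset.univ.offDiag : Finset (Fin n × Fin n)), ∑ t ∈ Finset.range k, D t pq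
      ≤ ∑ t ∈ Finset.range k, ∑ pq ∈ (Finset.univ ×ˢ Finset.univ : Finset (Fin n × Fin n)), D t pq := by
    calc ∑ pq ∈ (Finset.univ.offDiag : Finset (Fin n × Fin n)), ∑ t ∈ Finset.range k, D t pq
        ≤ ∑ pq ∈ (Finset.univ ×ˢ Finset.univ : Finset (Fin n × Fin n)),
            ∑ t ∈ Finset.range k, D t pq :=
          Finset.sum_le_sum_of_subset_of_nonneg (fun x hx => Finset.mem_product.mpr
            ⟨Finset.mem_univ _, Finset.mem_univ _⟩) fun pq _ _ =>
            Finset.sum_nonneg fun t _ => abs_nonneg _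
      _ = ∑ t ∈ Finset.range k,
            ∑ pq ∈ (Finset.univ ×ˢ Finset.univ : Finset (Fin n × Fin n)), D t pq :=
          Finset.sum_comm
  -- Step 4: per-layer bound
  have hE : ∀ t ∈ Finset.range k,
      ∑ pq ∈ (Finset.univ ×ˢ Finset.univ : Finset (Fin n × Fin n)), D t pq
        ≤ 2 * n * (((lay s t).support.card : ℤ)) := by
    intro t ht
    rw [Finset.mem_range] at ht
    have hstep : ∀ pq : Fin n × Fin n, D t pq ≤ M t pq.1 + M t pq.2 := fun pq => d_step s t _ _
    calc ∑ pq ∈ (Finset.univ ×ˢ Finset.univ : Finset (Fin n × Fin n)), D t pq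
        ≤ ∑ pq ∈ (Finset.univ ×ˢ Finset.univ : Finset (Fin n × Fin n)), (M t pq.1 + M t pq.2) :=
          Finset.sum_le_sum fun pq _ => hstep pq
      _ = ∑ p : Fin n, ∑ q : Fin n, (M t p + M t q) := by rw [Finset.sum_product]
      _ = 2 * n * ∑ v : Fin n, M t v := by
          have hT : ∀ p : Fin n, ∑ q : Fin n, (M t p + M t q)
              = (n : ℤ) * M t p + ∑ v : Fin n, M t v := by
            intro p
            rw [Finset.sum_add_distrib, Finset.sum_const, Finset.card_univ,
              Fintype.card_fin, nsmul_eq_mul]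
          rw [Finset.sum_congr rfl fun p _ => hT p, Finset.sum_add_distrib,
            Finset.sum_const, Finset.card_univ, Fintype.card_fin, nsmul_eq_mul,
            ← Finset.mul_sum]
          ring
      _ = 2 * n * (((lay s t).support.card : ℤ)) := by rw [mov_sum s ht]
  -- Step 5: total layer support equals twice the number of swaps
  have hF : ∑ t ∈ Finset.range k, (((lay s t).support.card : ℤ)) = 2 * (s.swaps : ℤ) := by
    have hnat : ∑ t ∈ Finset.range k, (lay s t).support.card = 2 * s.swaps := by
      have : ∀ t ∈ Finset.range k, (lay s t).support.card
          = 2 * ((lay s t).support.card / 2) := by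
        intro t ht
        rw [Finset.mem_range] at ht
        rw [Nat.mul_comm, layer_even (s.isSwapLayer _ (lay_mem s ht))]
      rw [Finset.sum_congr rfl this, ← Finset.mul_sum]
      congr 1
      exact sum_getD_div s.layers
    exact_mod_cast congrArg (Nat.cast : ℕ → ℤ) hnat
  -- Combine
  have main : ((m : ℤ) * m) * ((n : ℤ) - 2 * m) ≤ 4 * n * (s.swaps : ℤ) := by
    calc ((m : ℤ) * m) * ((n : ℤ) - 2 * m)
        ≤ ∑ pq ∈ (Finset.univ.offDiag : Finset (Fin n × Fin n)),
            (|pos s pq.1 0 - pos s pq.2 0| - 1) := hA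
      _ ≤ ∑ pq ∈ (Finset.univ.offDiag : Finset (Fin n × Fin n)),
            ∑ t ∈ Finset.range k, D t pq := hB2
      _ ≤ ∑ t ∈ Finset.range k,
            ∑ pq ∈ (Finset.univ ×ˢ Finset.univ : Finset (Fin n × Fin n)), D t pq := hC
      _ ≤ ∑ t ∈ Finset.range k, 2 * n * (((lay s t).support.card : ℤ)) :=
          Finset.sum_le_sum hE
      _ = 2 * n * ∑ t ∈ Finset.range k, (((lay s t).support.card : ℤ)) := by
          rw [Finset.mul_sum]
      _ = 4 * n * (s.swaps : ℤ) := by rw [hF]; ring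
  have mainN : m * m * (n - 2 * m) ≤ 4 * n * s.swaps := by
    zify [h2m]
    exact main
  have h1 : m * m * m ≤ 4 * n * s.swaps :=
    le_trans (Nat.mul_le_mul_left (m * m) (by omega : m ≤ n - 2 * m)) mainN
  have h2 : n ≤ 8 * m := by omega
  have h3 : n ^ 2 * n ≤ (2048 * s.swaps) * n := by
    calc n ^ 2 * n = n ^ 3 := by ring
      _ ≤ (8 * m) ^ 3 := Nat.pow_le_pow_left h2 3
      _ = 512 * (m * m * m) := by ring
      _ ≤ 512 * (4 * n * s.swaps) := Nat.mul_le_mul_left _ h1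
      _ = (2048 * s.swaps) * n := by ring
  exact Nat.le_of_mul_le_mul_right h3 (by omega)

lemma steps_lb (hn : 6 ≤ n) : n ≤ 2048 * s.steps := by
  set k := s.layers.length with hk
  have h0 : (0 : ℕ) < n := by omega
  set p := s.init.symm ⟨0, h0⟩ with hp
  set q := s.init.symm ⟨n - 1, by omega⟩ with hq
  have hpq : p ≠ q := by
    intro h
    have := congrArg s.init h
    rw [hp, hq, Equiv.apply_symm_apply, Equiv.apply_symm_apply] at this
    have := congrArg Fin.val this
    simp only at this
    omega
  obtain ⟨t, htk, h1⟩ := d_meet s hpq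
  have hp0 : pos s p 0 = 0 := by rw [pos_zero, hp, Equiv.apply_symm_apply]; simp
  have hq0 : pos s q 0 = (n : ℤ) - 1 := by
    rw [pos_zero, hq, Equiv.apply_symm_apply]
    simp only
    omega
  set d : ℕ → ℤ := fun i => |pos s p i - pos s q i| with hd
  have hstep : ∀ i, |d (i + 1) - d i| ≤ 2 := by
    intro i
    refine (d_step s i p q).trans ?_
    have := mov_le s i p
    have := mov_le s i q
    linarith
  have htel : d 0 - d t ≤ 2 * t := by
    have tele : ∑ i ∈ Finset.range t, (d (i+1) - d i) = d t - d 0 := Finset.sum_range_sub d t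
    calc d 0 - d t ≤ |d t - d 0| := by rw [abs_sub_comm]; exact le_abs_self _
      _ = |∑ i ∈ Finset.range t, (d (i+1) - d i)| := by rw [tele]
      _ ≤ ∑ i ∈ Finset.range t, |d (i+1) - d i| := Finset.abs_sum_le_sum_abs _ _
      _ ≤ ∑ _i ∈ Finset.range t, (2 : ℤ) := Finset.sum_le_sum fun i _ => hstep i
      _ = 2 * t := by rw [Finset.sum_const, Finset.card_range, nsmul_eq_mul]; ring
  have hd0 : d 0 = (n : ℤ) - 1 := by
    show |pos s p 0 - pos s q 0| = (n : ℤ) - 1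
    rw [hp0, hq0, zero_sub, abs_neg]
    exact abs_of_nonneg (by omega)
  have hdt : d t = 1 := h1
  have htk' : (t : ℤ) ≤ (k : ℤ) := by exact_mod_cast htk
  have hZ : (n : ℤ) ≤ 2 * (k : ℤ) + 2 := by
    rw [hd0, hdt] at htel
    linarith
  have hN : n ≤ 2 * k + 2 := by exact_mod_cast hZ
  have hsteps : s.steps = k := rfl
  rw [hsteps]
  omega

end TMPLower

lemma ENat.sInf_mem'' {S : Set ℕ∞} (h : S.Nonempty) : sInf S ∈ S := by
  obtain ⟨x, hx, hmin⟩ := wellFounded_lt.has_min S h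
  have : sInf S = x :=
    le_antisymm (sInf_le hx) (le_sInf fun b hb => not_lt.mp (hmin b hb))
  rw [this]; exact hx

lemma lb_of_all {S : Set ℕ∞} {a c : ℕ} (hc : (c : ℕ∞) ≠ 0)
    (h : ∀ x : ℕ∞, x ∈ S → (a : ℕ∞) ≤ (c : ℕ∞) * x) : (a : ℕ∞) ≤ (c : ℕ∞) * sInf S := by
  rcases S.eq_empty_or_nonempty with hS | hS
  · rw [hS, sInf_empty, ENat.mul_top hc]
    exact le_top
  · exact h _ (ENat.sInf_mem'' hS)


/-- There is a family of connected graphs `(H_n)` with `MS(H_n, K_n) ∈ Ω(n²)` and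
`MT(H_n, K_n) ∈ Ω(n)`. -/
theorem exists_quadratic_swap_family :
    ∃ H : (n : ℕ) → SimpleGraph (Fin n),
      (∀ n : ℕ, 1 ≤ n → (H n).Connected) ∧
      ∃ c N : ℕ, 0 < c ∧ ∀ n : ℕ, N ≤ n →
        ((n ^ 2 : ℕ) : ℕ∞) ≤ (c : ℕ∞) * MS (H n) (⊤ : SimpleGraph (Fin n)) ∧
        ((n : ℕ) : ℕ∞) ≤ (c : ℕ∞) * MT (H n) (⊤ : SimpleGraph (Fin n)) := by
  refine ⟨fun n => SimpleGraph.pathGraph n, fun n hn => ?_, 2048, 6, by norm_num,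
    fun n hn => ⟨?_, ?_⟩⟩
  · obtain ⟨k, rfl⟩ := Nat.exists_eq_add_of_le hn
    rw [Nat.add_comm]
    exact SimpleGraph.pathGraph_connected k
  · refine lb_of_all (by norm_num) fun x hx => ?_
    obtain ⟨s, rfl⟩ := hx
    rw [← Nat.cast_ofNat (n := 2048), ← Nat.cast_mul, Nat.cast_le]
    exact TMPLower.swaps_lb s hn
  · refine lb_of_all (by norm_num) fun x hx => ?_
    obtain ⟨s, rfl⟩ := hx
    rw [← Nat.cast_ofNat (n := 2048), ← Nat.cast_mul, Nat.cast_le]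
    exact TMPLower.steps_lb s hn
end

section
/- Let (H, A) be a TMP instance with H = (V, E) connected on n nodes and A = (Q, C), and let d₁ ≥ d₂ ≥ ⋯ ≥ d_n be the non-increasing degree sequence of H. Define D(H) := max over K ∈ {1, …, ⌊n/2⌋} of min( Σ_{k=1}^{K} (d_{2k−1} + d_{2k} − 2), |E| − K ). Then D(H) · MT(H, A) ≥ |C| − |E|. -/


private lemma sum_Icc_pair (d : ℕ → ℕ) (K : ℕ) :
    (Finset.Icc 1 (2*K)).sum d = (Finset.Icc 1 K).sum (fun k => d (2*k-1) + d (2*k)) := by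
  induction K with
  | zero => simp
  | succ K ih =>
    have h1 : 2 * (K + 1) = (2 * K + 1) + 1 := by ring
    rw [h1, Finset.sum_Icc_succ_top (by omega), Finset.sum_Icc_succ_top (by omega),
      Finset.sum_Icc_succ_top (by omega), ih]
    have e1 : 2 * (K + 1) - 1 = 2 * K + 1 := by omega
    have e2 : 2 * (K + 1) = 2 * K + 1 + 1 := by omega
    rw [e1, e2]
    omega

private lemma sum_antitone_le {d : ℕ → ℕ} {n : ℕ}
    (hmono : ∀ i j : ℕ, 1 ≤ i → i ≤ j → j ≤ n → d j ≤ d i)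
    (T : Finset ℕ) (hT : T ⊆ Finset.Icc 1 n) :
    T.sum d ≤ (Finset.Icc 1 T.card).sum d := by
  set m := T.card with hm
  clear_value m
  induction m generalizing T with
  | zero => simp [Finset.card_eq_zero.mp hm.symm]
  | succ m ih =>
    have hne : T.Nonempty := Finset.card_pos.mp (by omega)
    set t := T.max' hne with ht
    have htT : t ∈ T := T.max'_mem hne
    have htn : t ≤ n := (Finset.mem_Icc.mp (hT htT)).2
    have hsub : T ⊆ Finset.Icc 1 t := by
      intro x hx
      exact Finset.mem_Icc.mpr ⟨(Finset.mem_Icc.mp (hT hx)).1, T.le_max' x hx⟩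
    have htge : m + 1 ≤ t := by
      have h := Finset.card_le_card hsub
      rw [← hm, Nat.card_Icc] at h
      omega
    have herase : (T.erase t).card = m := by
      rw [Finset.card_erase_of_mem htT, ← hm]; omega
    have h1 : T.sum d = (T.erase t).sum d + d t := (Finset.sum_erase_add T d htT).symm
    rw [h1, Finset.sum_Icc_succ_top (by omega)]
    have h2 : d t ≤ d (m + 1) := hmono (m+1) t (by omega) htge htn
    have h3 := ih (T.erase t) (fun x hx => hT (Finset.erase_subset _ _ hx)) herase.symm
    exact Nat.add_le_add h3 h2


private lemma bad_card_le {V : Type*} [Fintype V] [DecidableEq V] (H : SimpleGraph V)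
    [DecidableRel H.Adj] (n : ℕ) (hV : Fintype.card V = n)
    (d : ℕ → ℕ) (hmono : ∀ i j : ℕ, 1 ≤ i → i ≤ j → j ≤ n → d j ≤ d i)
    (hdeg : ∃ e : V ≃ Fin n, ∀ v : V, H.degree v = d ((e v : ℕ) + 1))
    (hd1 : ∀ i, 1 ≤ i → i ≤ n → 1 ≤ d i)
    (π : Equiv.Perm V) (hπ : IsSwapLayer H π) :
    (H.edgeFinset.filter fun f => Sym2.map π f ∉ H.edgeFinset).card ≤
      (Finset.Icc 1 (n / 2)).sup fun K =>
          min ((Finset.Icc 1 K).sum fun k => d (2 * k - 1) + d (2 * k) - 2)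
            (H.edgeFinset.card - K) := by
  classical
  by_cases h1 : π = 1
  · subst h1
    have : (H.edgeFinset.filter fun f => Sym2.map (1 : Equiv.Perm V) f ∉ H.edgeFinset) = ∅ := by
      rw [Finset.filter_eq_empty_iff]
      intro f hf
      simpa using hf
    rw [show (H.edgeFinset.filter fun f => Sym2.map (⇑(1:Equiv.Perm V)) f ∉ H.edgeFinset) = ∅ from this, Finset.card_empty]
    exact Nat.zero_le _
  · have hinv : ∀ y, π (π y) = y := by
      intro y
      have := hπ.1
      calc π (π y) = (π * π) y := rfl
        _ = y := by rw [this]; rfl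
    set S := π.support with hSdef
    set M := S.image (fun v => s(v, π v)) with hMdef
    set K := M.card with hKdef
    set Bad := H.edgeFinset.filter fun f => Sym2.map π f ∉ H.edgeFinset with hBdef
    have hmemS : ∀ v, v ∈ S ↔ π v ≠ v := fun v => Equiv.Perm.mem_support
    have hSclosed : ∀ v ∈ S, π v ∈ S := by
      intro v hv
      rw [hmemS] at hv ⊢
      rw [hinv]
      exact fun h => hv h.symm
    -- S.card = 2 * K
    have hScard : S.card = 2 * K := by
      rw [hKdef, hMdef, Finset.card_eq_sum_card_image (fun v => s(v, π v)) S]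
      rw [Finset.sum_congr rfl (g := fun _ => 2) ?_, Finset.sum_const, smul_eq_mul]
      · ring
      · intro b hb
        obtain ⟨v, hv, rfl⟩ := Finset.mem_image.mp hb
        have hvne : π v ≠ v := (hmemS v).mp hv
        have : S.filter (fun w => s(w, π w) = s(v, π v)) = {v, π v} := by
          ext w
          simp only [Finset.mem_filter, Finset.mem_insert, Finset.mem_singleton]
          constructor
          · rintro ⟨hwS, hw⟩
            rcases Sym2.eq_iff.mp hw with ⟨h1, h2⟩ | ⟨h1, h2⟩
            · exact Or.inl h1
            · exact Or.inr h1
          · rintro (rfl | rfl)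
            · exact ⟨hv, rfl⟩
            · refine ⟨hSclosed v hv, ?_⟩
              rw [hinv]
              exact Sym2.eq_swap
        rw [this, Finset.card_pair (fun h => hvne h.symm)]
    have hKpos : 1 ≤ K := by
      rw [hKdef]
      refine Finset.card_pos.mpr ?_
      refine Finset.Nonempty.image ?_ _
      rw [hSdef, Finset.nonempty_iff_ne_empty, Ne, Equiv.Perm.support_eq_empty_iff]
      exact h1
    have hSn : S.card ≤ n := hV ▸ (Finset.card_le_univ S).trans_eq Finset.card_univ
    -- M is a set of edges disjoint from Bad
    have hME : M ⊆ H.edgeFinset := by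
      intro b hb
      obtain ⟨v, hv, rfl⟩ := Finset.mem_image.mp hb
      have hvne : π v ≠ v := (hmemS v).mp hv
      rcases hπ.2 v with h | h
      · exact absurd h hvne
      · rw [SimpleGraph.mem_edgeFinset]
        exact h
    have hMBad : ∀ f ∈ M, f ∉ Bad := by
      intro f hf
      obtain ⟨v, hv, rfl⟩ := Finset.mem_image.mp hf
      rw [hBdef, Finset.mem_filter]
      rintro ⟨-, hbad⟩
      apply hbad
      have heq : Sym2.map π (s(v, π v)) = s(v, π v) := by
        rw [Sym2.map_pair_eq, hinv]
        exact Sym2.eq_swap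
      rw [heq]
      exact hME hf
    -- Bound 2: Bad.card ≤ |E| - K
    have hBadE : Bad ⊆ H.edgeFinset \ M := by
      intro f hf
      rw [Finset.mem_sdiff]
      exact ⟨(Finset.mem_filter.mp hf).1, fun hM => hMBad f hM hf⟩
    have hbound2 : Bad.card ≤ H.edgeFinset.card - K := by
      calc Bad.card ≤ (H.edgeFinset \ M).card := Finset.card_le_card hBadE
        _ = H.edgeFinset.card - K := by rw [Finset.card_sdiff_of_subset hME]
    -- incidence double counting
    have hdouble : ∑ v ∈ S, H.degree v
        = ∑ f ∈ H.edgeFinset, (S.filter (fun v => v ∈ f)).card := by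
      have h1 : ∀ v : V, H.degree v = (H.edgeFinset.filter (fun f => v ∈ f)).card := by
        intro v
        rw [← SimpleGraph.card_incidenceFinset_eq_degree]
        congr 1
        ext f
        simp [SimpleGraph.mem_incidenceFinset, SimpleGraph.incidenceSet,
          Finset.mem_filter, SimpleGraph.mem_edgeFinset, Set.mem_setOf_eq]
      rw [Finset.sum_congr rfl (fun v _ => h1 v)]
      simp only [Finset.card_filter]
      exact Finset.sum_comm
    -- each bad edge has a moved endpoint
    have hb1 : ∀ f ∈ Bad, 1 ≤ (S.filter (fun v => v ∈ f)).card := by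
      intro f hf
      induction f using Sym2.ind with
      | _ a b =>
        rw [hBdef, Finset.mem_filter] at hf
        obtain ⟨hfE, hbad⟩ := hf
        have hab : a ∈ S ∨ b ∈ S := by
          by_contra hcon
          push_neg at hcon
          apply hbad
          have ha : π a = a := by
            by_contra h; exact hcon.1 ((hmemS a).mpr h)
          have hb : π b = b := by
            by_contra h; exact hcon.2 ((hmemS b).mpr h)
          rw [Sym2.map_pair_eq, ha, hb]
          exact hfE
        refine Finset.card_pos.mpr ?_
        rcases hab with h | h
        · exact ⟨a, Finset.mem_filter.mpr ⟨h, Sym2.mem_mk_left a b⟩⟩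
        · exact ⟨b, Finset.mem_filter.mpr ⟨h, Sym2.mem_mk_right a b⟩⟩
    have hb2 : ∀ f ∈ M, 2 ≤ (S.filter (fun v => v ∈ f)).card := by
      intro f hf
      obtain ⟨v, hv, rfl⟩ := Finset.mem_image.mp hf
      have hvne : π v ≠ v := (hmemS v).mp hv
      have hsub : ({v, π v} : Finset V) ⊆ S.filter (fun w => w ∈ s(v, π v)) := by
        intro w hw
        rcases Finset.mem_insert.mp hw with rfl | hw
        · exact Finset.mem_filter.mpr ⟨hv, Sym2.mem_mk_left _ _⟩
        · rw [Finset.mem_singleton] at hw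
          subst hw
          exact Finset.mem_filter.mpr ⟨hSclosed v hv, Sym2.mem_mk_right _ _⟩
      calc 2 = ({v, π v} : Finset V).card := (Finset.card_pair (fun h => hvne h.symm)).symm
        _ ≤ _ := Finset.card_le_card hsub
    have hdisj : Disjoint Bad M := Finset.disjoint_left.mpr (fun f hf hM => hMBad f hM hf)
    have hsubE : Bad ∪ M ⊆ H.edgeFinset :=
      Finset.union_subset (Finset.filter_subset _ _) hME
    have hge : Bad.card + 2 * K ≤ ∑ f ∈ H.edgeFinset, (S.filter (fun v => v ∈ f)).card := by
      calc Bad.card + 2 * K = ∑ _f ∈ Bad, 1 + ∑ _f ∈ M, 2 := by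
            rw [Finset.sum_const, Finset.sum_const, smul_eq_mul, smul_eq_mul]
            ring
        _ ≤ ∑ f ∈ Bad, (S.filter (fun v => v ∈ f)).card
            + ∑ f ∈ M, (S.filter (fun v => v ∈ f)).card :=
            Nat.add_le_add (Finset.sum_le_sum hb1) (Finset.sum_le_sum hb2)
        _ = ∑ f ∈ Bad ∪ M, (S.filter (fun v => v ∈ f)).card := (Finset.sum_union hdisj).symm
        _ ≤ _ := Finset.sum_le_sum_of_subset hsubE
    -- degree sum bound
    obtain ⟨e, he⟩ := hdeg
    have hsumdeg : ∑ v ∈ S, H.degree v ≤ ∑ i ∈ Finset.Icc 1 (2*K), d i := by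
      have hinj : Set.InjOn (fun v => (e v : ℕ) + 1) S := by
        intro x _ y _ h
        simp only at h
        exact e.injective (Fin.ext (by omega))
      have hTsub : S.image (fun v => (e v : ℕ) + 1) ⊆ Finset.Icc 1 n := by
        intro i hi
        obtain ⟨v, _, rfl⟩ := Finset.mem_image.mp hi
        have := (e v).isLt
        exact Finset.mem_Icc.mpr ⟨by omega, by omega⟩
      have hTcard : (S.image (fun v => (e v : ℕ) + 1)).card = 2*K := by
        rw [Finset.card_image_of_injOn hinj, hScard]
      calc ∑ v ∈ S, H.degree v = ∑ v ∈ S, d ((e v : ℕ) + 1) :=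
            Finset.sum_congr rfl (fun v _ => he v)
        _ = ∑ i ∈ S.image (fun v => (e v : ℕ) + 1), d i := (Finset.sum_image hinj).symm
        _ ≤ ∑ i ∈ Finset.Icc 1 (S.image (fun v => (e v : ℕ) + 1)).card, d i :=
            sum_antitone_le hmono _ hTsub
        _ = ∑ i ∈ Finset.Icc 1 (2*K), d i := by rw [hTcard]
    have h2K : 2*K ≤ n := by omega
    have hterm : ∀ k ∈ Finset.Icc 1 K, 2 ≤ d (2*k-1) + d (2*k) := by
      intro k hk
      rw [Finset.mem_Icc] at hk
      have ha := hd1 (2*k-1) (by omega) (by omega)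
      have hb := hd1 (2*k) (by omega) (by omega)
      omega
    have hRHS : ∑ k ∈ Finset.Icc 1 K, (d (2*k-1) + d (2*k))
        = (∑ k ∈ Finset.Icc 1 K, (d (2*k-1) + d (2*k) - 2)) + 2 * K := by
      calc ∑ k ∈ Finset.Icc 1 K, (d (2*k-1) + d (2*k))
          = ∑ k ∈ Finset.Icc 1 K, ((d (2*k-1) + d (2*k) - 2) + 2) :=
            Finset.sum_congr rfl (fun k hk => by have := hterm k hk; omega)
        _ = (∑ k ∈ Finset.Icc 1 K, (d (2*k-1) + d (2*k) - 2)) + 2 * K := by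
            rw [Finset.sum_add_distrib, Finset.sum_const, Nat.card_Icc, smul_eq_mul]
            ring_nf
            omega
    have hfinal1 : Bad.card ≤ ∑ k ∈ Finset.Icc 1 K, (d (2*k-1) + d (2*k) - 2) := by
      have hpair : ∑ i ∈ Finset.Icc 1 (2*K), d i
          = ∑ k ∈ Finset.Icc 1 K, (d (2*k-1) + d (2*k)) := sum_Icc_pair d K
      omega
    have hK2 : K ∈ Finset.Icc 1 (n/2) := Finset.mem_Icc.mpr ⟨hKpos, by omega⟩
    exact le_trans (le_min hfinal1 hbound2)
      (Finset.le_sup (f := fun K => min ((Finset.Icc 1 K).sum fun k => d (2 * k - 1) + d (2 * k) - 2)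
        (H.edgeFinset.card - K)) hK2)


private lemma degree_pos' {V : Type*} [Fintype V] [DecidableEq V] (H : SimpleGraph V)
    [DecidableRel H.Adj] (hconn : H.Connected) (h2 : 1 < Fintype.card V) (v : V) :
    0 < H.degree v := by
  rw [SimpleGraph.degree_pos_iff_exists_adj]
  obtain ⟨a, b, hab⟩ := Fintype.exists_pair_of_one_lt_card h2
  have hw : ∃ w : V, w ≠ v := by
    rcases eq_or_ne a v with rfl | h
    · exact ⟨b, hab.symm⟩
    · exact ⟨a, h⟩
  obtain ⟨w, hw⟩ := hw
  obtain ⟨p⟩ := hconn.preconnected v w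
  cases p with
  | nil => exact absurd rfl hw.symm
  | cons h q => exact ⟨_, h⟩

private lemma exists_degree_two' {V : Type*} [Fintype V] [DecidableEq V] (H : SimpleGraph V)
    [DecidableRel H.Adj] (hconn : H.Connected) (h3 : 3 ≤ Fintype.card V) :
    ∃ v : V, 2 ≤ H.degree v := by
  by_contra hcon
  push_neg at hcon
  have hd1 : ∀ v : V, H.degree v ≤ 1 := fun v => Nat.lt_succ_iff.mp (hcon v)
  have hne : Nonempty V := Fintype.card_pos_iff.mp (by omega)
  obtain ⟨a⟩ := hne
  have ha := degree_pos' H hconn (by omega) a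
  rw [SimpleGraph.degree_pos_iff_exists_adj] at ha
  obtain ⟨u, hau⟩ := ha
  -- find b outside {a, u}
  have hb : ∃ b : V, b ≠ a ∧ b ≠ u := by
    by_contra hb
    push_neg at hb
    have : (Finset.univ : Finset V) ⊆ {a, u} := by
      intro x _
      rcases eq_or_ne x a with rfl | h
      · simp
      · simp [hb x h]
    have := Finset.card_le_card this
    rw [Finset.card_univ] at this
    have h2 : ({a, u} : Finset V).card ≤ 2 := Finset.card_insert_le _ _ |>.trans (by simp)
    omega
  obtain ⟨b, hba, hbu⟩ := hb
  obtain ⟨w⟩ := hconn.preconnected a b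
  obtain ⟨p, hp⟩ := w.toPath
  have huniq : ∀ x y z : V, H.Adj x y → H.Adj x z → y = z := by
    intro x y z hxy hxz
    have h1 : y ∈ H.neighborFinset x := (SimpleGraph.mem_neighborFinset _ _ _).mpr hxy
    have h2 : z ∈ H.neighborFinset x := (SimpleGraph.mem_neighborFinset _ _ _).mpr hxz
    exact Finset.card_le_one.mp (hd1 x) y h1 z h2
  cases p with
  | nil => exact hba rfl
  | @cons _ x _ h q =>
    have hxu : x = u := huniq a x u h hau
    cases q with
    | nil => exact hbu hxu
    | @cons _ y _ h' r =>
      have hya : y = a := huniq x y a h' (by rw [hxu]; exact hau.symm)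
      subst hya
      have hnd := hp.support_nodup
      simp [SimpleGraph.Walk.support_cons] at hnd
private lemma sol_bound {V Q : Type*} [Fintype V] [DecidableEq V] [Fintype Q] [DecidableEq Q]
    {H : SimpleGraph V} {A : SimpleGraph Q} [DecidableRel H.Adj] [DecidableRel A.Adj]
    (D : ℕ) (hbad : ∀ π : Equiv.Perm V, IsSwapLayer H π →
      (H.edgeFinset.filter fun f => Sym2.map π f ∉ H.edgeFinset).card ≤ D)
    (s : TMPSolution H A) :
    A.edgeFinset.card ≤ H.edgeFinset.card + D * s.steps := by
  classical
  set k := s.steps with hk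
  set P : ℕ → Equiv.Perm V := fun t => ((s.layers.take t).reverse.prod) with hP
  set φ : ℕ → Sym2 Q → Sym2 V := fun t => Sym2.map (fun q => P t (s.init q)) with hφ
  have hφinj : ∀ t, Function.Injective (φ t) := by
    intro t
    apply Sym2.map.injective
    exact (s.init.trans (P t)).injective
  set ok : ℕ → Sym2 Q → Prop := fun t e => φ t e ∈ H.edgeFinset with hok
  have hex : ∀ e ∈ A.edgeFinset, ∃ t, t ≤ k ∧ ok t e := by
    intro e he
    induction e using Sym2.ind with
    | _ p q =>
      rw [SimpleGraph.mem_edgeFinset, SimpleGraph.mem_edgeSet] at he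
      obtain ⟨t, ht, hadj⟩ := s.meets p q he
      refine ⟨t, ht, ?_⟩
      rw [hok]
      simp only [hφ, Sym2.map_pair_eq, SimpleGraph.mem_edgeFinset, SimpleGraph.mem_edgeSet]
      exact hadj
  set τ : Sym2 Q → ℕ := fun e => if h : ∃ t, ok t e then Nat.find h else 0 with hτ
  have hτle : ∀ e ∈ A.edgeFinset, τ e ≤ k := by
    intro e he
    obtain ⟨t, ht, hokt⟩ := hex e he
    have hh : ∃ u, ok u e := ⟨t, hokt⟩
    rw [hτ]
    simp only
    rw [dif_pos hh]
    exact (Nat.find_le hokt).trans ht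
  have hτspec : ∀ e ∈ A.edgeFinset, ok (τ e) e := by
    intro e he
    obtain ⟨t, ht, hokt⟩ := hex e he
    have hh : ∃ u, ok u e := ⟨t, hokt⟩
    rw [hτ]
    simp only
    rw [dif_pos hh]
    exact Nat.find_spec hh
  have hτmin : ∀ e ∈ A.edgeFinset, ∀ u < τ e, ¬ ok u e := by
    intro e he u hu
    obtain ⟨t, ht, hokt⟩ := hex e he
    have hh : ∃ u, ok u e := ⟨t, hokt⟩
    rw [hτ] at hu
    simp only at hu
    rw [dif_pos hh] at hu
    exact Nat.find_min hh hu
  have hsplit : A.edgeFinset.card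
      = ∑ t ∈ Finset.range (k+1), (A.edgeFinset.filter fun e => τ e = t).card :=
    Finset.card_eq_sum_card_fiberwise
      (fun e he => Finset.mem_range.mpr (Nat.lt_succ_of_le (hτle e he)))
  have h0 : (A.edgeFinset.filter fun e => τ e = 0).card ≤ H.edgeFinset.card := by
    refine Finset.card_le_card_of_injOn (φ 0) ?_ ((hφinj 0).injOn)
    intro e he
    rw [Finset.mem_coe, Finset.mem_filter] at he
    have := hτspec e he.1
    rw [he.2] at this
    exact this
  have hstep : ∀ t, t < k → (A.edgeFinset.filter fun e => τ e = t+1).card ≤ D := by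
    intro t ht
    have ht' : t < s.layers.length := ht
    set π := s.layers.get ⟨t, ht'⟩ with hπdef
    have hπ := s.isSwapLayer π (List.get_mem _ _)
    have hinv : ∀ y, π (π y) = y := by
      intro y
      calc π (π y) = (π * π) y := rfl
        _ = y := by rw [hπ.1]; simp
    have hPsucc : P (t+1) = π * P t := by
      rw [hP]
      simp only
      rw [List.take_succ, List.getElem?_eq_getElem ht', Option.toList_some, List.reverse_append,
        List.reverse_singleton, List.singleton_append, List.prod_cons]
      rfl
    refine le_trans (Finset.card_le_card_of_injOn (φ (t+1)) ?_ ((hφinj (t+1)).injOn)) (hbad π hπ)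
    intro e he
    rw [Finset.mem_coe, Finset.mem_filter] at he
    obtain ⟨heC, hτe⟩ := he
    have hok1 : ok (t+1) e := by
      have := hτspec e heC
      rw [hτe] at this
      exact this
    have hok0 : ¬ ok t e := hτmin e heC t (by omega)
    rw [Finset.mem_coe, Finset.mem_filter]
    refine ⟨hok1, ?_⟩
    have hmap : Sym2.map π (φ (t+1) e) = φ t e := by
      rw [hφ]
      simp only
      rw [Sym2.map_map]
      congr 1
      funext q
      simp only [Function.comp_apply]
      rw [hPsucc]
      simp only [Equiv.Perm.mul_apply]
      rw [hinv]
    rw [hmap]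
    exact hok0
  calc A.edgeFinset.card
      = ∑ t ∈ Finset.range (k+1), (A.edgeFinset.filter fun e => τ e = t).card := hsplit
    _ = (∑ t ∈ Finset.range k, (A.edgeFinset.filter fun e => τ e = t+1).card)
        + (A.edgeFinset.filter fun e => τ e = 0).card := Finset.sum_range_succ' _ _
    _ ≤ (∑ _t ∈ Finset.range k, D) + H.edgeFinset.card :=
        Nat.add_le_add (Finset.sum_le_sum (fun t ht => hstep t (Finset.mem_range.mp ht))) h0
    _ = H.edgeFinset.card + D * k := by
        rw [Finset.sum_const, Finset.card_range, smul_eq_mul]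
        ring

/-- Lower bound on the number of steps: `D(H) · MT(H,A) ≥ |C| - |E|`, where
`D(H) = max_{K ∈ [⌊n/2⌋]} min(Σ_{k=1}^{K} (d_{2k-1} + d_{2k} - 2), |E| - K)` and
`d₁ ≥ ⋯ ≥ d_n` is the non-increasing degree sequence of `H`. -/
theorem lower_step_bound {V Q : Type*} [Fintype V] [DecidableEq V] [Fintype Q]
    [DecidableEq Q] (H : SimpleGraph V) (A : SimpleGraph Q)
    [DecidableRel H.Adj] [DecidableRel A.Adj] (n : ℕ)
    (hV : Fintype.card V = n) (hQ : Fintype.card Q = n) (hconn : H.Connected)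
    (d : ℕ → ℕ) (hmono : ∀ i j : ℕ, 1 ≤ i → i ≤ j → j ≤ n → d j ≤ d i)
    (hdeg : ∃ e : V ≃ Fin n, ∀ v : V, H.degree v = d ((e v : ℕ) + 1)) :
    ((A.edgeFinset.card - H.edgeFinset.card : ℕ) : ℕ∞) ≤
      (((Finset.Icc 1 (n / 2)).sup fun K =>
          min ((Finset.Icc 1 K).sum fun k => d (2 * k - 1) + d (2 * k) - 2)
            (H.edgeFinset.card - K) : ℕ) : ℕ∞) * MT H A := by
  classical
  set D := (Finset.Icc 1 (n / 2)).sup fun K =>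
      min ((Finset.Icc 1 K).sum fun k => d (2 * k - 1) + d (2 * k) - 2)
        (H.edgeFinset.card - K) with hD
  rcases le_or_gt n 2 with hn | hn
  · -- small case : |C| ≤ |E|
    have hCE : A.edgeFinset.card ≤ H.edgeFinset.card := by
      rcases Nat.eq_zero_or_pos A.edgeFinset.card with h0 | hpos
      · omega
      · obtain ⟨f, hf⟩ := Finset.card_pos.mp hpos
        have h2 : 2 ≤ n := by
          induction f using Sym2.ind with
          | _ p q =>
            rw [SimpleGraph.mem_edgeFinset, SimpleGraph.mem_edgeSet] at hf
            have hne := hf.ne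
            have hlt : 1 < Fintype.card Q :=
              Fintype.one_lt_card_iff_nontrivial.mpr ⟨⟨p, q, hne⟩⟩
            omega
        have hn2 : n = 2 := by omega
        have hCle : A.edgeFinset.card ≤ 1 := by
          have h := SimpleGraph.card_edgeFinset_le_card_choose_two (G := A)
          rw [hQ, hn2] at h
          simpa using h
        have hEge : 1 ≤ H.edgeFinset.card := by
          have hV2 : 1 < Fintype.card V := by omega
          obtain ⟨v⟩ : Nonempty V := Fintype.card_pos_iff.mp (by omega)
          have hp := degree_pos' H hconn hV2 v
          rw [SimpleGraph.degree_pos_iff_exists_adj] at hp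
          obtain ⟨w, hw⟩ := hp
          exact Finset.card_pos.mpr ⟨s(v, w), SimpleGraph.mem_edgeFinset.mpr hw⟩
        omega
    rw [Nat.sub_eq_zero_of_le hCE]
    exact_mod_cast zero_le
  · -- n ≥ 3
    have hV2 : 1 < Fintype.card V := by omega
    have hd1 : ∀ i, 1 ≤ i → i ≤ n → 1 ≤ d i := by
      intro i h1 h2
      obtain ⟨e, he⟩ := hdeg
      set v := e.symm ⟨i - 1, by omega⟩ with hv
      have hev : (e v : ℕ) + 1 = i := by
        rw [hv, Equiv.apply_symm_apply]
        show i - 1 + 1 = i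
        omega
      rw [← hev, ← he v]
      exact degree_pos' H hconn hV2 v
    have hbad : ∀ π : Equiv.Perm V, IsSwapLayer H π →
        (H.edgeFinset.filter fun f => Sym2.map π f ∉ H.edgeFinset).card ≤ D :=
      fun π hπ => bad_card_le H n hV d hmono hdeg hd1 π hπ
    have hD1 : 1 ≤ D := by
      obtain ⟨v, hv2⟩ := exists_degree_two' H hconn (by omega)
      obtain ⟨e, he⟩ := hdeg
      have hevn : (e v : ℕ) + 1 ≤ n := by have := (e v).isLt; omega
      have hdd : 2 ≤ d 1 := by
        have h := hmono 1 ((e v : ℕ) + 1) le_rfl (by omega) hevn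
        rw [← he v] at h
        omega
      have hE2 : 2 ≤ H.edgeFinset.card := by
        have hcard : 1 < (H.neighborFinset v).card := by
          rw [SimpleGraph.card_neighborFinset_eq_degree]
          omega
        obtain ⟨x, hx, y, hy, hxy⟩ := Finset.one_lt_card.mp hcard
        rw [SimpleGraph.mem_neighborFinset] at hx hy
        have hne : s(v, x) ≠ s(v, y) := by
          intro h
          rcases Sym2.eq_iff.mp h with ⟨-, h2⟩ | ⟨h1, -⟩
          · exact hxy h2
          · exact H.ne_of_adj hy h1
        exact Finset.one_lt_card.mpr ⟨s(v, x), SimpleGraph.mem_edgeFinset.mpr hx,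
          s(v, y), SimpleGraph.mem_edgeFinset.mpr hy, hne⟩
      have h1K : (1 : ℕ) ∈ Finset.Icc 1 (n / 2) := Finset.mem_Icc.mpr ⟨le_rfl, by omega⟩
      have hmin1 : 1 ≤ min ((Finset.Icc 1 1).sum fun k => d (2 * k - 1) + d (2 * k) - 2)
          (H.edgeFinset.card - 1) := by
        refine le_min ?_ (by omega)
        have hsum : ((Finset.Icc 1 1).sum fun k => d (2 * k - 1) + d (2 * k) - 2)
            = d (2 * 1 - 1) + d (2 * 1) - 2 := by
          rw [Finset.Icc_self, Finset.sum_singleton]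
        have hd2 : 1 ≤ d 2 := hd1 2 (by omega) (by omega)
        rw [hsum]
        have : (2 : ℕ) * 1 - 1 = 1 := by omega
        rw [this]
        have : (2 : ℕ) * 1 = 2 := by omega
        rw [this]
        omega
      have hsup : min ((Finset.Icc 1 1).sum fun k => d (2 * k - 1) + d (2 * k) - 2)
          (H.edgeFinset.card - 1) ≤ D := by
        rw [hD]
        exact Finset.le_sup (f := fun K =>
          min ((Finset.Icc 1 K).sum fun k => d (2 * k - 1) + d (2 * k) - 2)
            (H.edgeFinset.card - K)) h1K
      exact le_trans hmin1 hsup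
    rcases Set.eq_empty_or_nonempty
        {m : ℕ∞ | ∃ s : TMPSolution H A, m = (s.steps : ℕ∞)} with hT | hT
    · rw [MT, hT, sInf_empty, ENat.mul_top (by exact_mod_cast (by omega : D ≠ 0))]
      exact le_top
    · obtain ⟨m, hmT, hmin'⟩ := (wellFounded_lt (α := ℕ∞)).has_min _ hT
      have hMT : MT H A = m :=
        le_antisymm (sInf_le hmT) (le_sInf (fun x hx => not_lt.mp (hmin' x hx)))
      obtain ⟨s, hs⟩ := hmT
      have hb := sol_bound D hbad s
      rw [hMT, hs]
      have hnat : A.edgeFinset.card - H.edgeFinset.card ≤ D * s.steps := by omega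
      calc ((A.edgeFinset.card - H.edgeFinset.card : ℕ) : ℕ∞)
          ≤ ((D * s.steps : ℕ) : ℕ∞) := by exact_mod_cast hnat
        _ = (D : ℕ∞) * (s.steps : ℕ∞) := by push_cast; rfl
end

section
/- Let H be a tree on n ≥ 3 nodes. Then MT(H, K_n) ≥ (n − 1)/2, where K_n is the complete graph on n nodes. -/
private lemma card_biUnion_chain {α : Type*} [DecidableEq α] (F : ℕ → Finset α) :
    ∀ m, ((Finset.range (m+1)).biUnion F).card ≤
      (F 0).card + ∑ t ∈ Finset.range m, (F (t+1) \ F t).card := by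
  intro m
  induction m with
  | zero => simp
  | succ m ih =>
    have hsplit : (Finset.range (m+2)).biUnion F =
        F (m+1) ∪ (Finset.range (m+1)).biUnion F := by
      rw [Finset.range_add_one, Finset.biUnion_insert]
    rw [hsplit]
    have h1 : (F (m+1) ∪ (Finset.range (m+1)).biUnion F).card ≤
        (F (m+1) \ (Finset.range (m+1)).biUnion F).card +
        ((Finset.range (m+1)).biUnion F).card := by
      rw [← Finset.sdiff_union_self_eq_union]
      exact Finset.card_union_le _ _
    have h2 : F (m+1) \ (Finset.range (m+1)).biUnion F ⊆ F (m+1) \ F m := by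
      apply Finset.sdiff_subset_sdiff (le_refl _)
      intro x hx
      exact Finset.mem_biUnion.mpr ⟨m, Finset.self_mem_range_succ m, hx⟩
    calc (F (m+1) ∪ (Finset.range (m+1)).biUnion F).card
        ≤ (F (m+1) \ F m).card + ((Finset.range (m+1)).biUnion F).card := by
          exact h1.trans (Nat.add_le_add_right (Finset.card_le_card h2) _)
      _ ≤ (F (m+1) \ F m).card + ((F 0).card + ∑ t ∈ Finset.range m, (F (t+1) \ F t).card) := by
          gcongr
      _ = (F 0).card + ∑ t ∈ Finset.range (m+1), (F (t+1) \ F t).card := by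
          rw [Finset.sum_range_succ]; ring

private lemma key_bound {V Q : Type*} [Fintype V] [DecidableEq V] [Fintype Q]
    (H : SimpleGraph V) (n : ℕ) (hn : 3 ≤ n)
    (hV : Fintype.card V = n) (hQ : Fintype.card Q = n) (htree : SimpleGraph.IsTree H)
    (s : TMPSolution H (⊤ : SimpleGraph Q)) : n - 1 ≤ 2 * s.steps := by
  classical
  set k := s.steps with hk
  set g : ℕ → Equiv.Perm V := fun t => ((s.layers.take t).reverse.prod) with hg
  set b : ℕ → (Q ≃ V) := fun t => s.init.trans (g t) with hbdef
  set F : ℕ → Finset (Sym2 Q) := fun t => H.edgeFinset.image (Sym2.map (b t).symm) with hF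
  have hFcard : ∀ t, (F t).card = n - 1 := by
    intro t
    have : (F t).card = H.edgeFinset.card :=
      Finset.card_image_of_injective _ (Sym2.map.injective (b t).symm.injective)
    have h2 := htree.card_edgeFinset
    omega
  have hmemF : ∀ t (p q : Q), H.Adj (b t p) (b t q) → s(p,q) ∈ F t := by
    intro t p q h
    refine Finset.mem_image.mpr ⟨s(b t p, b t q), ?_, ?_⟩
    · rw [SimpleGraph.mem_edgeFinset]; exact h
    · simp
  have hstep : ∀ t, t < k → (F (t+1) \ F t).card ≤ n - 2 := by
    intro t ht
    have ht' : t < s.layers.length := ht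
    set π : Equiv.Perm V := s.layers.get ⟨t, ht'⟩ with hπdef
    have hmem : π ∈ s.layers := List.get_mem _ _
    obtain ⟨hinv, hmove⟩ := s.isSwapLayer π hmem
    have hgsucc : g (t+1) = π * g t := by
      have htake : s.layers.take (t+1) = s.layers.take t ++ [π] := by
        rw [List.take_succ, List.getElem?_eq_getElem ht']
        rfl
      simp [hg, htake, List.reverse_append]
    by_cases hπ1 : π = 1
    · have : b (t+1) = b t := by
        simp [hbdef, hgsucc, hπ1]
      simp [hF, this]
    · obtain ⟨v, hv⟩ : ∃ v, π v ≠ v := by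
        by_contra hc
        push_neg at hc
        exact hπ1 (Equiv.ext hc)
      have hadj : H.Adj v (π v) := (hmove v).resolve_left hv
      set e₀ : Sym2 Q := s((b t).symm v, (b t).symm (π v)) with he₀
      have hππ : π (π v) = v := by
        have := congrFun (congrArg (fun e : Equiv.Perm V => (e : V → V)) hinv) v
        simpa using this
      have hbapp : ∀ (u : ℕ) (x : Q), b u x = g u (s.init x) := fun _ _ => rfl
      have h0t : e₀ ∈ F t := by
        refine Finset.mem_image.mpr ⟨s(v, π v), ?_, ?_⟩
        · rw [SimpleGraph.mem_edgeFinset]; exact hadj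
        · simp [he₀]
      have hs1 : (b (t+1)).symm (π v) = (b t).symm v := by
        rw [Equiv.symm_apply_eq, hbapp, hgsucc]
        have : g t (s.init ((b t).symm v)) = v := (b t).apply_symm_apply v
        simp [this]
      have hs2 : (b (t+1)).symm v = (b t).symm (π v) := by
        rw [Equiv.symm_apply_eq, hbapp, hgsucc]
        have : g t (s.init ((b t).symm (π v))) = π v := (b t).apply_symm_apply (π v)
        simp [this, hππ]
      have h0t1 : e₀ ∈ F (t+1) := by
        refine Finset.mem_image.mpr ⟨s(π v, v), ?_, ?_⟩
        · rw [SimpleGraph.mem_edgeFinset]; exact hadj.symm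
        · rw [Sym2.map_pair_eq, hs1, hs2, he₀, Sym2.eq_swap]
      have hsub : F (t+1) \ F t ⊆ (F (t+1)).erase e₀ := by
        intro x hx
        rw [Finset.mem_sdiff] at hx
        refine Finset.mem_erase.mpr ⟨?_, hx.1⟩
        rintro rfl
        exact hx.2 h0t
      have := Finset.card_le_card hsub
      rw [Finset.card_erase_of_mem h0t1, hFcard (t+1)] at this
      omega
  have hcover : (⊤ : SimpleGraph Q).edgeFinset ⊆ (Finset.range (k+1)).biUnion F := by
    intro e he
    revert he
    refine Sym2.ind ?_ e
    intro p q he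
    rw [SimpleGraph.mem_edgeFinset, SimpleGraph.mem_edgeSet] at he
    obtain ⟨t, htk, hadj⟩ := s.meets p q he
    have hlen : s.layers.length = k := rfl
    refine Finset.mem_biUnion.mpr ⟨t, Finset.mem_range.mpr (by omega), ?_⟩
    exact hmemF t p q hadj
  have hbig : n.choose 2 ≤ (n - 1) + k * (n - 2) := by
    have h1 := Finset.card_le_card hcover
    rw [SimpleGraph.card_edgeFinset_top_eq_card_choose_two, hQ] at h1
    have h2 := card_biUnion_chain F k
    have h3 : ∑ t ∈ Finset.range k, (F (t+1) \ F t).card ≤ k * (n - 2) := by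
      calc ∑ t ∈ Finset.range k, (F (t+1) \ F t).card
          ≤ ∑ _t ∈ Finset.range k, (n - 2) :=
            Finset.sum_le_sum (fun t ht => hstep t (Finset.mem_range.mp ht))
        _ = k * (n - 2) := by rw [Finset.sum_const, Finset.card_range, smul_eq_mul]
    have h4 := hFcard 0
    calc n.choose 2 ≤ ((Finset.range (k+1)).biUnion F).card := h1
      _ ≤ (F 0).card + ∑ t ∈ Finset.range k, (F (t+1) \ F t).card := h2
      _ ≤ (n - 1) + k * (n - 2) := by rw [h4]; exact Nat.add_le_add_left h3 _
  -- arithmetic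
  obtain ⟨m, rfl⟩ : ∃ m, n = m + 3 := ⟨n - 3, by omega⟩
  have hch : (m + 3).choose 2 = (m + 3) * (m + 2) / 2 := by
    rw [Nat.choose_two_right]
    norm_num
  have heven : 2 ∣ (m + 3) * (m + 2) := by
    rcases Nat.even_or_odd m with ⟨c, hc⟩ | ⟨c, hc⟩
    · exact Dvd.dvd.mul_left ⟨c + 1, by omega⟩ _
    · exact Dvd.dvd.mul_right ⟨c + 2, by omega⟩ _
  have hdvd : (m + 3) * (m + 2) = 2 * ((m + 3).choose 2) := by
    rw [hch]
    exact (Nat.mul_div_cancel' heven).symm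
  have hb2 : (m + 3) * (m + 2) ≤ 2 * (m + 2) + 2 * (k * (m + 1)) := by
    have e1 : m + 3 - 1 = m + 2 := by omega
    have e2 : m + 3 - 2 = m + 1 := by omega
    rw [e1, e2] at hbig
    calc (m + 3) * (m + 2) = 2 * ((m + 3).choose 2) := hdvd
      _ ≤ 2 * ((m + 2) + k * (m + 1)) := Nat.mul_le_mul_left 2 hbig
      _ = 2 * (m + 2) + 2 * (k * (m + 1)) := by ring
  have : m + 3 - 1 = m + 2 := by omega
  rw [this]
  nlinarith [hb2]


/-- For every tree `H` on `n ≥ 3` nodes, `MT(H, K_n) ≥ (n-1)/2`. -/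
theorem lower_step_bound_trees {V Q : Type*} [Fintype V] [DecidableEq V] [Fintype Q]
    (H : SimpleGraph V) (n : ℕ) (hn : 3 ≤ n)
    (hV : Fintype.card V = n) (hQ : Fintype.card Q = n) (htree : H.IsTree) :
    ((n - 1 : ℕ) : ℕ∞) ≤ 2 * MT H (⊤ : SimpleGraph Q) := by
  classical
  rw [MT]
  by_cases hS : {x : ℕ∞ | ∃ s : TMPSolution H (⊤ : SimpleGraph Q), x = (s.steps : ℕ∞)}.Nonempty
  · obtain ⟨s, hs⟩ := csInf_mem hS
    rw [hs]
    have hkey := key_bound H n hn hV hQ htree s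
    have : ((n - 1 : ℕ) : ℕ∞) ≤ ((2 * s.steps : ℕ) : ℕ∞) := Nat.cast_le.mpr hkey
    calc ((n - 1 : ℕ) : ℕ∞) ≤ ((2 * s.steps : ℕ) : ℕ∞) := this
      _ = 2 * (s.steps : ℕ∞) := by push_cast; ring
  · rw [Set.not_nonempty_iff_eq_empty] at hS
    rw [hS, sInf_empty]
    simp [le_top]
end

section
/- For every n ≥ 2, MT(K_{1,n−1}, K_n) = n − 2, where K_{1,n−1} is the star graph on n nodes (one center adjacent to n−1 leaves) and K_n is the complete graph on n nodes. -/
/-- The star graph on `n` nodes: the node `0` is the center, adjacent to all other nodes. -/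
def starGraph (n : ℕ) : SimpleGraph (Fin n) where
  Adj i j := i ≠ j ∧ ((i : ℕ) = 0 ∨ (j : ℕ) = 0)
  symm := by
    constructor
    intro i j ⟨h1, h2⟩
    exact ⟨h1.symm, h2.symm⟩
  loopless := by
    constructor
    intro i ⟨h1, _⟩
    exact h1 rfl

namespace MTaux

def lyr (n : ℕ) (hn : 2 ≤ n) : List (Equiv.Perm (Fin n)) :=
  (List.finRange (n-2)).map (fun i => Equiv.swap ⟨0, by omega⟩ ⟨i.1+1, by omega⟩)

lemma lyr_length (n : ℕ) (hn : 2 ≤ n) : (lyr n hn).length = n - 2 := by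
  simp [lyr]

lemma lyr_get (n : ℕ) (hn : 2 ≤ n) (t : ℕ) (ht : t < n - 2) :
    (lyr n hn).get ⟨t, by rw [lyr_length]; exact ht⟩ =
      Equiv.swap ⟨0, by omega⟩ ⟨t+1, by omega⟩ := by
  simp [lyr, List.get_eq_getElem]

def P (n : ℕ) (hn : 2 ≤ n) (t : ℕ) : Equiv.Perm (Fin n) :=
  ((lyr n hn).take t).reverse.prod

lemma P_succ (n : ℕ) (hn : 2 ≤ n) (t : ℕ) (ht : t < n - 2) :
    P n hn (t+1) = Equiv.swap ⟨0, by omega⟩ ⟨t+1, by omega⟩ * P n hn t := by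
  have hlt : t < (lyr n hn).length := by rw [lyr_length]; exact ht
  unfold P
  rw [← List.take_concat_get hlt, List.concat_eq_append, List.reverse_append,
    List.reverse_singleton, List.singleton_append, List.prod_cons]
  congr 1
  simpa [List.get_eq_getElem] using lyr_get n hn t ht

lemma P_spec (n : ℕ) (hn : 2 ≤ n) (t : ℕ) (ht : t ≤ n - 2) :
    (∀ x : Fin n, t < x.1 → P n hn t x = x) ∧
    (1 ≤ t → P n hn t ⟨t, by omega⟩ = ⟨0, by omega⟩) := by
  induction t with
  | zero =>
    constructor
    · intro x _
      simp [P]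
    · omega
  | succ t ih =>
    have ih' := ih (by omega)
    rw [P_succ n hn t (by omega)]
    constructor
    · intro x hx
      simp only [Equiv.Perm.coe_mul, Function.comp_apply]
      rw [ih'.1 x (by omega)]
      apply Equiv.swap_apply_of_ne_of_ne
      · intro h; have := congrArg Fin.val h; simp only [Fin.val_mk] at this; omega
      · intro h; have := congrArg Fin.val h; simp only [Fin.val_mk] at this; omega
    · intro _
      simp only [Equiv.Perm.coe_mul, Function.comp_apply]
      rw [ih'.1 ⟨t+1, by omega⟩ (by exact Nat.lt_succ_self t), Equiv.swap_apply_right]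

lemma meets_aux (n : ℕ) (hn : 2 ≤ n) (p q : Fin n) (hpq : p ≠ q) (hle : p.1 ≤ q.1) :
    ∃ t ≤ (lyr n hn).length, (starGraph n).Adj (P n hn t p) (P n hn t q) := by
  have hplt : p.1 < q.1 := by
    rcases lt_or_eq_of_le hle with h | h
    · exact h
    · exact absurd (Fin.ext h) hpq
  have hq : q.1 ≤ n - 1 := by omega
  have hp2 : p.1 ≤ n - 2 := by omega
  rcases Nat.eq_zero_or_pos p.1 with hp0 | hp0
  · refine ⟨0, by simp, ?_⟩
    have hP0 : P n hn 0 = 1 := by simp [P]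
    rw [hP0]
    exact ⟨hpq, Or.inl hp0⟩
  · refine ⟨p.1, by rw [lyr_length]; exact hp2, ?_⟩
    have hspec := P_spec n hn p.1 hp2
    have hpe : (⟨p.1, by omega⟩ : Fin n) = p := rfl
    have hPp : P n hn p.1 p = ⟨0, by omega⟩ := by
      rw [← hpe]; exact hspec.2 hp0
    constructor
    · intro h
      exact hpq ((P n hn p.1).injective h)
    · left
      rw [hPp]

noncomputable def sol (n : ℕ) (hn : 2 ≤ n) :
    TMPSolution (starGraph n) (⊤ : SimpleGraph (Fin n)) where
  init := Equiv.refl _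
  layers := lyr n hn
  isSwapLayer := by
    intro π hπ
    simp only [lyr, List.mem_map] at hπ
    obtain ⟨i, _, rfl⟩ := hπ
    constructor
    · rw [Equiv.swap_mul_self]
    · intro v
      by_cases h0 : v = ⟨0, by omega⟩
      · subst h0
        right
        rw [Equiv.swap_apply_left]
        refine ⟨?_, Or.inl rfl⟩
        intro h; apply absurd (congrArg Fin.val h); simp
      · by_cases h1 : v = ⟨i.1+1, by omega⟩
        · subst h1
          right
          rw [Equiv.swap_apply_right]
          refine ⟨?_, Or.inr rfl⟩
          intro h; apply absurd (congrArg Fin.val h); simp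
        · left; exact Equiv.swap_apply_of_ne_of_ne h0 h1
  meets := by
    intro p q hpq
    have hpq' : p ≠ q := hpq.ne
    rcases le_total p.1 q.1 with hle | hle
    · exact meets_aux n hn p q hpq' hle
    · obtain ⟨t, ht, h⟩ := meets_aux n hn q p hpq'.symm hle
      exact ⟨t, ht, h.symm⟩

lemma sol_steps (n : ℕ) (hn : 2 ≤ n) : (sol n hn).steps = n - 2 := lyr_length n hn

lemma lower (n : ℕ) (hn : 2 ≤ n) (s : TMPSolution (starGraph n) (⊤ : SimpleGraph (Fin n))) :
    n - 2 ≤ s.steps := by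
  set k := s.layers.length with hk
  by_contra hcon
  push_neg at hcon
  -- token at center at time t
  set c : ℕ → Fin n := fun t => s.init.symm (((s.layers.take t).reverse.prod)⁻¹ ⟨0, by omega⟩)
    with hc
  set S : Finset (Fin n) := Finset.image (fun t : Fin (k+1) => c t.1) Finset.univ with hS
  have hScard : S.card ≤ k + 1 := le_trans Finset.card_image_le (by simp)
  have hcomp : ∀ p ∈ Sᶜ, ∀ q ∈ Sᶜ, p ≠ q → False := by
    intro p hp q hq hpq
    obtain ⟨t, ht, hadj⟩ := s.meets p q (by simp [hpq])
    rcases hadj.2 with h0 | h0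
    · apply (Finset.mem_compl.mp hp)
      rw [hS]
      refine Finset.mem_image.mpr ⟨⟨t, by omega⟩, Finset.mem_univ _, ?_⟩
      have : ((s.layers.take t).reverse.prod) (s.init p) = ⟨0, by omega⟩ := Fin.ext h0
      simp [hc, ← this]
    · apply (Finset.mem_compl.mp hq)
      rw [hS]
      refine Finset.mem_image.mpr ⟨⟨t, by omega⟩, Finset.mem_univ _, ?_⟩
      have : ((s.layers.take t).reverse.prod) (s.init q) = ⟨0, by omega⟩ := Fin.ext h0
      simp [hc, ← this]
  have hcompcard : Sᶜ.card ≤ 1 := by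
    by_contra h
    push_neg at h
    obtain ⟨p, hp, q, hq, hpq⟩ := Finset.one_lt_card.mp h
    exact hcomp p hp q hq hpq
  have : n ≤ k + 2 := by
    have := Finset.card_add_card_compl S
    simp only [Fintype.card_fin] at this
    omega
  unfold TMPSolution.steps at hcon
  omega

end MTaux

/-- For every `n ≥ 2`, `MT(K_{1,n-1}, K_n) = n - 2`. -/
theorem MT_star_complete (n : ℕ) (hn : 2 ≤ n) :
    MT (starGraph n) (⊤ : SimpleGraph (Fin n)) = ((n - 2 : ℕ) : ℕ∞) := by
  apply le_antisymm
  · apply sInf_le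
    exact ⟨MTaux.sol n hn, by rw [MTaux.sol_steps]⟩
  · apply le_sInf
    rintro b ⟨s, rfl⟩
    exact_mod_cast MTaux.lower n hn s
end
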